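/- arXiv:2512.09763 — 4 statements merged into one kernel-verified Lean document; each statement's English description precedes it below -/
import Mathlib

section
/- Let µ be a Borel probability measure on ℝ^d with finite second moment, γ a tangent element at µ, and η₁, η₂ Borel probability measures on C([0,1],ℝ^d) with (e₀)_#η₁ = (e₀)_#η₂ = µ and (e₀,e₁)_#η₁ = (e₀,e₁)_#η₂. If Ψ₁ is a parallel transport of γ along η₁, then there exists a parallel transport Ψ₂ of γ along η₂ such that (e₀,e₁)_#Ψ₂ = (e₀,e₁)_#Ψ₁, where (e₀,e₁) maps a curve to its pair of endpoint values. In particular, the possible endpoint data of parallel transports of γ depend only on the coupling (e₀,e₁)_#η. -/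
open MeasureTheory ProbabilityTheory
open scoped ENNReal NNReal unitInterval

set_option maxHeartbeats 1000000
set_option synthInstance.maxHeartbeats 1000000

noncomputable section

abbrev Rd (d : ℕ) := EuclideanSpace ℝ (Fin d)

abbrev Curves (E : Type*) [TopologicalSpace E] := C(unitInterval, E)

instance (E : Type*) [TopologicalSpace E] : MeasurableSpace (Curves E) := borel _
instance (E : Type*) [TopologicalSpace E] : BorelSpace (Curves E) := ⟨rfl⟩

/-- Evaluation at time `t` of a continuous curve. -/
def ev {E : Type*} [TopologicalSpace E] (t : unitInterval) (f : Curves E) : E := f t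

/-- First-component curve of a curve in a product space. -/
def p₁ {E F : Type*} [TopologicalSpace E] [TopologicalSpace F] (ψ : Curves (E × F)) : Curves E :=
  ⟨fun t => (ψ t).1, continuous_fst.comp ψ.continuous⟩

/-- Finite second moment. -/
def FinSM {E : Type*} [MeasurableSpace E] [NormedAddCommGroup E] (μ : Measure E) : Prop :=
  ∫⁻ x, (‖x‖₊ : ℝ≥0∞) ^ 2 ∂μ < ⊤

/-- A tangent element at `μ`. -/
def IsTangent {E : Type*} [MeasurableSpace E] [NormedAddCommGroup E]
    (μ : Measure E) (γ : Measure (E × E)) : Prop :=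
  IsProbabilityMeasure γ ∧ γ.map Prod.fst = μ ∧ FinSM (γ.map Prod.snd)

/-- Parallel transport of a tangent element `γ` along a Lagrangian path `η`. -/
def IsParallelTransport {E : Type*} [TopologicalSpace E] [MeasurableSpace E]
    (γ : Measure (E × E)) (η : Measure (Curves E)) (Ψ : Measure (Curves (E × E))) : Prop :=
  IsProbabilityMeasure Ψ ∧
  (∀ᵐ ψ ∂Ψ, ∀ t : unitInterval, (ψ t).2 = (ψ 0).2) ∧
  Ψ.map p₁ = η ∧
  Ψ.map (ev 0) = γ

/-- Endpoint evaluation map: a curve goes to its pair of values at times 0 and 1. -/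
def ev01 {E : Type*} [TopologicalSpace E] (f : Curves E) : E × E := (f 0, f 1)

open ProbabilityTheory in
/-- Gluing lemma: pushing forward `μ ⊗ₘ (κ.comap g hg)` by `Prod.map g id`
gives `(μ.map g) ⊗ₘ κ`. -/
lemma map_compProd_comap {α β Ω : Type*} [MeasurableSpace α] [MeasurableSpace β]
    [MeasurableSpace Ω] (μ : Measure α) [SFinite μ] {g : α → β} (hg : Measurable g)
    (κ : Kernel β Ω) [IsSFiniteKernel κ] :
    (μ ⊗ₘ κ.comap g hg).map (Prod.map g id) = (μ.map g) ⊗ₘ κ := by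
  ext s hs
  rw [Measure.map_apply (hg.prodMap measurable_id) hs,
    Measure.compProd_apply (hs.preimage (hg.prodMap measurable_id)),
    Measure.compProd_apply hs,
    lintegral_map (Kernel.measurable_kernel_prodMk_left hs) hg]
  refine lintegral_congr fun a => ?_
  rw [Kernel.comap_apply]
  rfl

lemma measurable_ev {E : Type*} [TopologicalSpace E] [MeasurableSpace E] [BorelSpace E]
    (t : unitInterval) : Measurable (ev (E := E) t) :=
  (continuous_eval_const t).measurable

lemma continuous_ev01 {E : Type*} [TopologicalSpace E] : Continuous (ev01 (E := E)) :=
  (continuous_eval_const 0).prodMk (continuous_eval_const 1)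

lemma measurable_ev01 {E : Type*} [TopologicalSpace E] [MeasurableSpace E] [BorelSpace E]
    [SecondCountableTopology E] : Measurable (ev01 (E := E)) :=
  continuous_ev01.measurable

lemma continuous_p₁ {E F : Type*} [TopologicalSpace E] [TopologicalSpace F] :
    Continuous (p₁ (E := E) (F := F)) := by
  have : p₁ (E := E) (F := F) =
      fun ψ => (⟨Prod.fst, continuous_fst⟩ : C(E × F, E)).comp ψ := by
    funext ψ; ext t; rfl
  rw [this]
  exact ContinuousMap.continuous_postcomp _

lemma measurable_p₁ {E F : Type*} [TopologicalSpace E] [TopologicalSpace F] :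
    Measurable (p₁ (E := E) (F := F)) :=
  continuous_p₁.measurable

/-- The map attaching a constant second coordinate to a curve. -/
def attach {E F : Type*} [TopologicalSpace E] [TopologicalSpace F]
    (p : Curves E × F) : Curves (E × F) :=
  ⟨fun t => (p.1 t, p.2), (map_continuous p.1).prodMk continuous_const⟩

lemma continuous_attach {E F : Type*} [TopologicalSpace E] [TopologicalSpace F] :
    Continuous (attach (E := E) (F := F)) := by
  apply ContinuousMap.continuous_of_continuous_uncurry
  exact (ContinuousEval.continuous_eval.comp
    ((continuous_fst.fst).prodMk continuous_snd)).prodMk continuous_fst.snd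

theorem stmt2 {d : ℕ} (μ : Measure (Rd d)) [IsProbabilityMeasure μ] (hμ : FinSM μ)
    (γ : Measure (Rd d × Rd d)) (hγ : IsTangent μ γ)
    (η₁ η₂ : Measure (Curves (Rd d))) [IsProbabilityMeasure η₁] [IsProbabilityMeasure η₂]
    (hη₁ : η₁.map (ev 0) = μ) (hη₂ : η₂.map (ev 0) = μ)
    (hend : η₁.map ev01 = η₂.map ev01)
    (Ψ₁ : Measure (Curves (Rd d × Rd d))) (hΨ₁ : IsParallelTransport γ η₁ Ψ₁) :
    ∃ Ψ₂ : Measure (Curves (Rd d × Rd d)),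
      IsParallelTransport γ η₂ Ψ₂ ∧ Ψ₂.map ev01 = Ψ₁.map ev01 := by
  classical
  set E := Rd d
  obtain ⟨hΨprob, hΨconst, hΨp₁, hΨev0⟩ := hΨ₁
  haveI : IsProbabilityMeasure Ψ₁ := hΨprob
  -- the joint law of (endpoints of first component, initial second component) under Ψ₁
  set q : Curves (E × E) → (E × E) × E := fun ψ => (((ψ 0).1, (ψ 1).1), (ψ 0).2) with hq_def
  have hq : Measurable q := by
    have : Continuous q := by
      refine Continuous.prodMk (Continuous.prodMk ?_ ?_) ?_
      · exact continuous_fst.comp (continuous_eval_const 0)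
      · exact continuous_fst.comp (continuous_eval_const 1)
      · exact continuous_snd.comp (continuous_eval_const 0)
    exact this.measurable
  set ν : Measure ((E × E) × E) := Ψ₁.map q with hν_def
  haveI : IsProbabilityMeasure ν := Measure.isProbabilityMeasure_map hq.aemeasurable
  -- its first marginal is the endpoint law of η₁ (= that of η₂)
  have hνfst : ν.fst = η₂.map ev01 := by
    rw [hν_def, Measure.fst, Measure.map_map measurable_fst hq]
    have h1 : (Prod.fst ∘ q) = ev01 ∘ p₁ := rfl
    rw [h1, ← Measure.map_map measurable_ev01 measurable_p₁, hΨp₁, hend]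
  set κ := ν.condKernel with hκ_def
  haveI : IsMarkovKernel κ := Measure.instIsMarkovKernelCondKernel ν
  set m : Measure (Curves E × E) := η₂ ⊗ₘ κ.comap ev01 measurable_ev01 with hm_def
  haveI : IsProbabilityMeasure m := by rw [hm_def]; infer_instance
  have hattach : Measurable (attach (E := E) (F := E)) := continuous_attach.measurable
  refine ⟨m.map attach, ⟨?_, ?_, ?_, ?_⟩, ?_⟩
  -- key identity: law of ((x 0, x 1), v) under m is ν
  · exact Measure.isProbabilityMeasure_map hattach.aemeasurable
  · -- second component is constant
    have hcl : IsClosed {ψ : Curves (E × E) | ∀ t : unitInterval, (ψ t).2 = (ψ 0).2} := by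
      have : {ψ : Curves (E × E) | ∀ t : unitInterval, (ψ t).2 = (ψ 0).2} =
          ⋂ t : unitInterval, {ψ : Curves (E × E) | (ψ t).2 = (ψ 0).2} := by
        ext ψ; simp
      rw [this]
      exact isClosed_iInter fun t => isClosed_eq
        (continuous_snd.comp (continuous_eval_const t))
        (continuous_snd.comp (continuous_eval_const 0))
    rw [MeasureTheory.ae_map_iff hattach.aemeasurable hcl.measurableSet]
    exact Filter.Eventually.of_forall fun p t => rfl
  · -- first-component marginal is η₂
    rw [Measure.map_map measurable_p₁ hattach]
    have h1 : (p₁ ∘ attach) = (Prod.fst : Curves E × E → Curves E) := by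
      funext p; ext t; rfl
    rw [h1, hm_def, ← Measure.fst, Measure.fst_compProd]
  · -- initial value law is γ
    have hkey : m.map (Prod.map ev01 id) = ν := by
      rw [hm_def, map_compProd_comap η₂ measurable_ev01 κ, ← hνfst, hκ_def]
      exact ν.disintegrate ν.condKernel
    have h1 : (ev 0 ∘ attach) =
        (fun r : (E × E) × E => (r.1.1, r.2)) ∘ (Prod.map ev01 id) := rfl
    rw [Measure.map_map (measurable_ev 0) hattach, h1,
      ← Measure.map_map (measurable_fst.fst.prodMk measurable_snd)
        (measurable_ev01.prodMap measurable_id), hkey, hν_def,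
      Measure.map_map (measurable_fst.fst.prodMk measurable_snd) hq]
    have h2 : ((fun r : (E × E) × E => (r.1.1, r.2)) ∘ q) = ev 0 := by
      funext ψ
      show ((ψ 0).1, (ψ 0).2) = ψ 0
      exact Prod.mk.eta
    rw [h2, hΨev0]
  · -- endpoint laws agree
    have hkey : m.map (Prod.map ev01 id) = ν := by
      rw [hm_def, map_compProd_comap η₂ measurable_ev01 κ, ← hνfst, hκ_def]
      exact ν.disintegrate ν.condKernel
    set g : (E × E) × E → (E × E) × (E × E) := fun r => ((r.1.1, r.2), (r.1.2, r.2)) with hg_def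
    have hg : Measurable g :=
      (measurable_fst.fst.prodMk measurable_snd).prodMk
        (measurable_fst.snd.prodMk measurable_snd)
    have h1 : (ev01 ∘ attach) = g ∘ (Prod.map ev01 id) := rfl
    rw [Measure.map_map measurable_ev01 hattach, h1,
      ← Measure.map_map hg (measurable_ev01.prodMap measurable_id), hkey, hν_def,
      Measure.map_map hg hq]
    refine (Measure.map_congr ?_).symm
    filter_upwards [hΨconst] with ψ hψ
    show (ψ 0, ψ 1) = (((ψ 0).1, (ψ 0).2), ((ψ 1).1, (ψ 0).2))
    have h2 : ((ψ 1).1, (ψ 0).2) = ψ 1 := by rw [← hψ 1]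
    rw [h2, Prod.mk.eta]

end
end

section
/- Let µ be a Borel probability measure on ℝ^d with finite second moment, γ a tangent element at µ, and η a Borel probability measure on C([0,1],ℝ^d) with (e₀)_#η = µ. Assume there exists a measurable f : [0,1]×ℝ^d → ℝ^d, bounded and Lipschitz in the space variable uniformly in time, such that η is concentrated on curves θ satisfying θ(t) = θ(0) + ∫₀ᵗ f(s,θ(s)) ds for all t ∈ [0,1]. Then there exists a unique parallel transport of γ along η. -/
open MeasureTheory
open scoped ENNReal NNReal unitInterval

noncomputable section

/-- Projection of `ℝ` onto `[0,1]`. -/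
def pr (s : ℝ) : unitInterval := Set.projIcc 0 1 zero_le_one s

/-! ### Auxiliary material -/

set_option synthInstance.maxHeartbeats 1000000 in
instance stmt4_polish (d : ℕ) : PolishSpace (Curves (Rd d)) := inferInstance

namespace Stmt4Aux

open ProbabilityTheory

variable {d : ℕ}

/-- Pair a curve with a constant second component. -/
def Fm (d : ℕ) : Curves (Rd d) × Rd d → Curves (Rd d × Rd d) :=
  fun p => p.1.prodMk (ContinuousMap.const _ p.2)

/-- Extract the first-component curve and initial second component. -/
def Hm (d : ℕ) : Curves (Rd d × Rd d) → Curves (Rd d) × Rd d :=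
  fun ψ => (p₁ ψ, (ψ 0).2)

/-- Initial-point map. -/
def em (d : ℕ) : Curves (Rd d) × Rd d → Rd d × Rd d := fun p => (p.1 0, p.2)

lemma continuous_Fm : Continuous (Fm d) := by
  apply ContinuousMap.continuous_of_continuous_uncurry
  exact (continuous_eval.comp
    ((continuous_fst.comp continuous_fst).prodMk continuous_snd)).prodMk
    (continuous_snd.comp continuous_fst)

lemma continuous_p₁ : Continuous (p₁ (E := Rd d) (F := Rd d)) := by
  apply ContinuousMap.continuous_of_continuous_uncurry
  exact continuous_fst.comp continuous_eval

lemma continuous_Hm : Continuous (Hm d) :=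
  continuous_p₁.prodMk (continuous_snd.comp (continuous_eval_const 0))

lemma continuous_em : Continuous (em d) :=
  ((continuous_eval_const 0).comp continuous_fst).prodMk continuous_snd

lemma p₁_Fm : p₁ ∘ Fm d = Prod.fst := funext fun p => ContinuousMap.ext fun t => rfl

lemma ev0_Fm : ev 0 ∘ Fm d = em d := rfl

lemma em_Hm : em d ∘ Hm d = ev (E := Rd d × Rd d) 0 := rfl

lemma Fm_Hm {ψ : Curves (Rd d × Rd d)} (h : ∀ t : unitInterval, (ψ t).2 = (ψ 0).2) :
    Fm d (Hm d ψ) = ψ :=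
  ContinuousMap.ext fun t => Prod.ext rfl (h t).symm

/-- The set of curves with constant second component is measurable. -/
lemma measurableSet_const2 :
    MeasurableSet {ψ : Curves (Rd d × Rd d) | ∀ t : unitInterval, (ψ t).2 = (ψ 0).2} := by
  have h : {ψ : Curves (Rd d × Rd d) | ∀ t : unitInterval, (ψ t).2 = (ψ 0).2}
      = ⋂ t : unitInterval, {ψ | (ψ t).2 = (ψ 0).2} := by
    ext ψ; simp [Set.mem_iInter]
  rw [h]
  exact (isClosed_iInter fun t =>
    isClosed_eq (continuous_snd.comp (continuous_eval_const t))
      (continuous_snd.comp (continuous_eval_const 0))).measurableSet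

/-- Mapping a composed product by the first coordinate map. -/
lemma map_compProd_comap {α β γ' : Type*} [MeasurableSpace α] [MeasurableSpace β]
    [MeasurableSpace γ'] (η : Measure α) [SFinite η] (κ : Kernel β γ') [IsSFiniteKernel κ]
    {g : α → β} (hg : Measurable g) :
    (η.compProd (κ.comap g hg)).map (fun p => (g p.1, p.2)) = (η.map g).compProd κ := by
  ext B hB
  have hm : Measurable fun p : α × γ' => (g p.1, p.2) :=
    Measurable.prodMk (hg.comp measurable_fst) measurable_snd
  rw [Measure.map_apply hm hB,
    Measure.compProd_apply (hm hB),
    Measure.compProd_apply hB,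
    lintegral_map (Kernel.measurable_kernel_prodMk_left hB) hg]
  refine lintegral_congr fun θ => ?_
  rw [Kernel.comap_apply]
  rfl

/-- A measure concentrated on a set where a nice map is injective is determined by its
pushforward under that map. -/
lemma measure_eq_image {Ω β : Type*} [MeasurableSpace Ω] [TopologicalSpace Ω] [PolishSpace Ω]
    [BorelSpace Ω] [MeasurableSpace β] [TopologicalSpace β] [T2Space β] [BorelSpace β]
    {e : Ω → β} (he : Continuous e) {A : Set Ω} (hA : MeasurableSet A)
    (hinj : Set.InjOn e A) (lam : Measure Ω) (hAc : lam Aᶜ = 0) {B : Set Ω}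
    (hB : MeasurableSet B) :
    lam B = (lam.map e) (e '' (B ∩ A)) := by
  have hBA : MeasurableSet (B ∩ A) := hB.inter hA
  have hT : MeasurableSet (e '' (B ∩ A)) :=
    hBA.image_of_continuousOn_injOn he.continuousOn (hinj.mono Set.inter_subset_right)
  have step2 : e ⁻¹' (e '' (B ∩ A)) ∩ A = B ∩ A := by
    apply subset_antisymm
    · rintro x ⟨hx, hxA⟩
      obtain ⟨y, hy, hyx⟩ := hx
      rwa [← hinj hy.2 hxA hyx]
    · exact fun x hx => ⟨Set.mem_image_of_mem e hx, hx.2⟩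
  have step1 : lam B = lam (B ∩ A) := by
    rw [← measure_inter_add_diff B hA,
      measure_mono_null (Set.diff_subset_compl B A) hAc, add_zero]
  have step3 : lam (e ⁻¹' (e '' (B ∩ A))) = lam (B ∩ A) := by
    rw [← measure_inter_add_diff (e ⁻¹' (e '' (B ∩ A))) hA, step2,
      measure_mono_null (Set.diff_subset_compl _ _) hAc, add_zero]
  rw [step1, ← step3, Measure.map_apply he.measurable hT]

end Stmt4Aux

open ProbabilityTheory in
set_option maxHeartbeats 2000000 in
set_option synthInstance.maxHeartbeats 1000000 in
theorem stmt4 {d : ℕ} (μ : Measure (Rd d)) [IsProbabilityMeasure μ] (hμ : FinSM μ)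
    (γ : Measure (Rd d × Rd d)) (hγ : IsTangent μ γ)
    (η : Measure (Curves (Rd d))) [IsProbabilityMeasure η] (hη : η.map (ev 0) = μ)
    (f : unitInterval → Rd d → Rd d)
    (hfmeas : Measurable (Function.uncurry f))
    (hfbdd : ∃ M : ℝ, ∀ t x, ‖f t x‖ ≤ M)
    (hflip : ∃ L : ℝ≥0, ∀ t, LipschitzWith L (f t))
    (hconc : ∀ᵐ θ ∂η, ∀ t : unitInterval,
      θ t = θ 0 + ∫ s in (0:ℝ)..(t:ℝ), f (pr s) (θ (pr s))) :
    ∃! Ψ : Measure (Curves (Rd d × Rd d)), IsParallelTransport γ η Ψ := by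
  classical
  obtain ⟨M, hM⟩ := hfbdd
  obtain ⟨L, hL⟩ := hflip
  -- basic continuity / measurability facts
  have hpr_cont : Continuous pr := by unfold pr; exact continuous_projIcc
  have hpr_coe : ∀ t : unitInterval, pr (t : ℝ) = t := fun t => by
    rw [pr, Set.projIcc_of_mem zero_le_one t.2]
  have hmeasInt : ∀ θ : Curves (Rd d), Measurable fun s : ℝ => f (pr s) (θ (pr s)) := fun θ =>
    hfmeas.comp (hpr_cont.measurable.prodMk ((θ.continuous.comp hpr_cont).measurable))
  have hII : ∀ (θ : Curves (Rd d)) (a b : ℝ),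
      IntervalIntegrable (fun s => f (pr s) (θ (pr s))) volume a b := by
    intro θ a b
    refine (intervalIntegrable_const (c := M)).mono_fun
      ((hmeasInt θ).aestronglyMeasurable) ?_
    refine Filter.Eventually.of_forall fun s => ?_
    exact (hM _ _).trans (by rw [Real.norm_eq_abs]; exact le_abs_self M)
  -- the solution set A
  set A : Set (Curves (Rd d)) := {θ | ∀ t : unitInterval,
    θ t = θ 0 + ∫ s in (0:ℝ)..(t:ℝ), f (pr s) (θ (pr s))} with hA_def
  have hI_cont : ∀ t : unitInterval,
      Continuous fun θ : Curves (Rd d) => ∫ s in (0:ℝ)..(t:ℝ), f (pr s) (θ (pr s)) := by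
    intro t
    refine (LipschitzWith.of_dist_le_mul (K := L) ?_).continuous
    intro θ₁ θ₂
    rw [dist_eq_norm, ← intervalIntegral.integral_sub (hII θ₁ 0 t) (hII θ₂ 0 t)]
    have hb : ∀ s ∈ Set.uIoc (0:ℝ) (t:ℝ),
        ‖f (pr s) (θ₁ (pr s)) - f (pr s) (θ₂ (pr s))‖ ≤ L * dist θ₁ θ₂ := by
      intro s _
      have h1 := (hL (pr s)).dist_le_mul (θ₁ (pr s)) (θ₂ (pr s))
      rw [dist_eq_norm] at h1
      exact h1.trans (mul_le_mul_of_nonneg_left (ContinuousMap.dist_apply_le_dist _) L.coe_nonneg)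
    have h2 := intervalIntegral.norm_integral_le_of_norm_le_const hb
    refine h2.trans ?_
    rw [sub_zero, abs_of_nonneg t.2.1]
    have h3 : (L : ℝ) * dist θ₁ θ₂ * (t : ℝ) ≤ (L : ℝ) * dist θ₁ θ₂ * 1 :=
      mul_le_mul_of_nonneg_left t.2.2 (mul_nonneg L.coe_nonneg dist_nonneg)
    simpa using h3
  have hA_meas : MeasurableSet A := by
    have h : A = ⋂ t : unitInterval, {θ : Curves (Rd d) |
        θ t = θ 0 + ∫ s in (0:ℝ)..(t:ℝ), f (pr s) (θ (pr s))} := by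
      ext θ; simp [hA_def, Set.mem_iInter]
    rw [h]
    exact (isClosed_iInter fun t =>
      isClosed_eq (continuous_eval_const t)
        ((continuous_eval_const 0).add (hI_cont t))).measurableSet
  have hηA : η Aᶜ = 0 := by
    rw [hA_def, Set.compl_setOf]
    exact ae_iff.mp hconc
  -- uniqueness of solutions with the same initial condition (Grönwall)
  have huniq : ∀ θ₁ θ₂ : Curves (Rd d), θ₁ ∈ A → θ₂ ∈ A → θ₁ 0 = θ₂ 0 → θ₁ = θ₂ := by
    intro θ₁ θ₂ h₁ h₂ h0
    set g : ℝ → ℝ := fun s => ‖θ₁ (pr s) - θ₂ (pr s)‖ with hg_def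
    have hg_cont : Continuous g :=
      continuous_norm.comp ((θ₁.continuous.comp hpr_cont).sub (θ₂.continuous.comp hpr_cont))
    have hg_nonneg : ∀ s, 0 ≤ g s := fun s => norm_nonneg _
    set h : ℝ → ℝ := fun t => ∫ s in (0:ℝ)..t, g s with hh_def
    have hderiv : ∀ t : ℝ, HasDerivAt h (g t) t := fun t =>
      intervalIntegral.integral_hasDerivAt_right (hg_cont.intervalIntegrable 0 t)
        (hg_cont.stronglyMeasurableAtFilter _ _) hg_cont.continuousAt
    have hh_nonneg : ∀ t ∈ Set.Icc (0:ℝ) 1, 0 ≤ h t := fun t ht =>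
      intervalIntegral.integral_nonneg ht.1 fun u _ => hg_nonneg u
    have hbound : ∀ t ∈ Set.Icc (0:ℝ) 1, g t ≤ L * h t := by
      intro t ht
      have hpt : ((pr t : unitInterval) : ℝ) = t := by
        rw [pr, Set.projIcc_of_mem zero_le_one ht]
      have hsub : θ₁ (pr t) - θ₂ (pr t)
          = ∫ s in (0:ℝ)..t, (f (pr s) (θ₁ (pr s)) - f (pr s) (θ₂ (pr s))) := by
        rw [intervalIntegral.integral_sub (hII θ₁ 0 t) (hII θ₂ 0 t)]
        have e1 := h₁ (pr t)
        have e2 := h₂ (pr t)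
        rw [hpt] at e1 e2
        rw [e1, e2, h0]
        abel
      have hgt : g t = ‖∫ s in (0:ℝ)..t,
          (f (pr s) (θ₁ (pr s)) - f (pr s) (θ₂ (pr s)))‖ := by
        rw [hg_def]
        simp only
        rw [hsub]
      rw [hgt]
      have step1 : ‖∫ s in (0:ℝ)..t, (f (pr s) (θ₁ (pr s)) - f (pr s) (θ₂ (pr s)))‖
          ≤ ∫ s in (0:ℝ)..t, ‖f (pr s) (θ₁ (pr s)) - f (pr s) (θ₂ (pr s))‖ :=
        intervalIntegral.norm_integral_le_integral_norm ht.1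
      have step2 : ∫ s in (0:ℝ)..t, ‖f (pr s) (θ₁ (pr s)) - f (pr s) (θ₂ (pr s))‖
          ≤ ∫ s in (0:ℝ)..t, (L : ℝ) * g s := by
        refine intervalIntegral.integral_mono_on ht.1
          ((hII θ₁ 0 t).sub (hII θ₂ 0 t)).norm
          ((continuous_const.mul hg_cont).intervalIntegrable 0 t) fun s _ => ?_
        have h1 := (hL (pr s)).dist_le_mul (θ₁ (pr s)) (θ₂ (pr s))
        rw [dist_eq_norm, dist_eq_norm] at h1
        exact h1
      have step3 : ∫ s in (0:ℝ)..t, (L : ℝ) * g s = L * h t := by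
        rw [hh_def]
        exact intervalIntegral.integral_const_mul _ _
      calc ‖∫ s in (0:ℝ)..t, (f (pr s) (θ₁ (pr s)) - f (pr s) (θ₂ (pr s)))‖
          ≤ ∫ s in (0:ℝ)..t, ‖f (pr s) (θ₁ (pr s)) - f (pr s) (θ₂ (pr s))‖ := step1
        _ ≤ ∫ s in (0:ℝ)..t, (L : ℝ) * g s := step2
        _ = L * h t := step3
    have hzero : ∀ t ∈ Set.Icc (0:ℝ) 1, h t = 0 := by
      intro t ht
      have key := norm_le_gronwallBound_of_norm_deriv_right_le (f := h) (f' := g)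
        (δ := 0) (K := L) (ε := 0) (a := 0) (b := 1)
        (Continuous.continuousOn (continuous_iff_continuousAt.2 fun x => (hderiv x).continuousAt))
        (fun x _ => (hderiv x).hasDerivWithinAt)
        (by simp [hh_def])
        (fun x hx => by
          have hxI : x ∈ Set.Icc (0:ℝ) 1 := ⟨hx.1, hx.2.le⟩
          rw [Real.norm_of_nonneg (hg_nonneg x), Real.norm_of_nonneg (hh_nonneg x hxI), add_zero]
          exact hbound x hxI)
        t ht
      rw [gronwallBound_ε0] at key
      simp only [zero_mul] at key
      simpa using key
    have hgzero : ∀ t ∈ Set.Icc (0:ℝ) 1, g t = 0 := fun t ht =>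
      le_antisymm (by simpa [hzero t ht] using hbound t ht) (hg_nonneg t)
    refine ContinuousMap.ext fun t => ?_
    have h1 : ‖θ₁ (pr (t : ℝ)) - θ₂ (pr (t : ℝ))‖ = 0 := hgzero (t : ℝ) t.2
    rw [hpr_coe t, norm_eq_zero, sub_eq_zero] at h1
    exact h1
  -- injectivity of the initial-point map on A × (Rd d)
  set e : Curves (Rd d) × Rd d → Rd d × Rd d := Stmt4Aux.em d with he_def
  have he_cont : Continuous e := Stmt4Aux.continuous_em
  set Au : Set (Curves (Rd d) × Rd d) := Prod.fst ⁻¹' A with hAu_def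
  have hAu_meas : MeasurableSet Au := hA_meas.preimage measurable_fst
  have hinj : Set.InjOn e Au := by
    rintro ⟨θ₁, v₁⟩ hp ⟨θ₂, v₂⟩ hq hpq
    have h1 : θ₁ 0 = θ₂ 0 := congrArg Prod.fst hpq
    have h2 : v₁ = v₂ := congrArg Prod.snd hpq
    exact Prod.ext (huniq θ₁ θ₂ hp hq h1) h2
  -- any coupling with the right marginals is determined
  have hcoup : ∀ lam : Measure (Curves (Rd d) × Rd d),
      lam.map Prod.fst = η → lam.map e = γ →
      ∀ B : Set (Curves (Rd d) × Rd d), MeasurableSet B → lam B = γ (e '' (B ∩ Au)) := by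
    intro lam hfst hmap B hB
    have hlamAc : lam Auᶜ = 0 := by
      have h1 : Auᶜ = Prod.fst ⁻¹' Aᶜ := rfl
      rw [h1, ← Measure.map_apply measurable_fst hA_meas.compl, hfst]
      exact hηA
    have h2 := Stmt4Aux.measure_eq_image he_cont hAu_meas hinj lam hlamAc hB
    rwa [hmap] at h2
  -- construction of the parallel transport
  haveI : IsProbabilityMeasure γ := hγ.1
  set κ : Kernel (Rd d) (Rd d) := γ.condKernel with hk_def
  have hev0_meas : Measurable fun θ : Curves (Rd d) => θ 0 :=
    (continuous_eval_const 0).measurable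
  set κ' : Kernel (Curves (Rd d)) (Rd d) :=
    κ.comap (fun θ : Curves (Rd d) => θ 0) hev0_meas with hk'_def
  set lam0 : Measure (Curves (Rd d) × Rd d) := η.compProd κ' with hlam0_def
  have hlam0_fst : lam0.map Prod.fst = η := Measure.fst_compProd η κ'
  have hlam0_e : lam0.map e = γ := by
    have key := Stmt4Aux.map_compProd_comap η κ hev0_meas
    have hη' : η.map (fun θ : Curves (Rd d) => θ 0) = μ := hη
    rw [hη'] at key
    have hdis := γ.disintegrate γ.condKernel
    have hfstγ : γ.fst = μ := hγ.2.1
    rw [hfstγ] at hdis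
    exact key.trans hdis
  set Ψ : Measure (Curves (Rd d × Rd d)) := lam0.map (Stmt4Aux.Fm d) with hPsi_def
  have hFm_meas : Measurable (Stmt4Aux.Fm d) := Stmt4Aux.continuous_Fm.measurable
  have hp1_meas : Measurable (p₁ (E := Rd d) (F := Rd d)) := Stmt4Aux.continuous_p₁.measurable
  have hHm_meas : Measurable (Stmt4Aux.Hm d) := Stmt4Aux.continuous_Hm.measurable
  have hev0psi_meas : Measurable (ev (E := Rd d × Rd d) 0) :=
    (continuous_eval_const 0).measurable
  haveI : IsProbabilityMeasure lam0 := by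
    rw [hlam0_def]; infer_instance
  have hPsi_PT : IsParallelTransport γ η Ψ := by
    refine ⟨by rw [hPsi_def]; exact Measure.isProbabilityMeasure_map hFm_meas.aemeasurable, ?_, ?_, ?_⟩
    · rw [hPsi_def]
      exact (MeasureTheory.ae_map_iff hFm_meas.aemeasurable Stmt4Aux.measurableSet_const2).2
        (Filter.Eventually.of_forall fun p t => rfl)
    · rw [hPsi_def, Measure.map_map hp1_meas hFm_meas, Stmt4Aux.p₁_Fm]
      exact hlam0_fst
    · rw [hPsi_def, Measure.map_map hev0psi_meas hFm_meas, Stmt4Aux.ev0_Fm]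
      exact hlam0_e
  refine ⟨Ψ, hPsi_PT, ?_⟩
  intro Ψ' hPT'
  have hconst := hPT'.2.1
  have hPsi'_eq : Ψ' = (Ψ'.map (Stmt4Aux.Hm d)).map (Stmt4Aux.Fm d) := by
    rw [Measure.map_map hFm_meas hHm_meas]
    have h1 : Ψ'.map (Stmt4Aux.Fm d ∘ Stmt4Aux.Hm d) = Ψ'.map id :=
      Measure.map_congr (hconst.mono fun ψ hψ => Stmt4Aux.Fm_Hm hψ)
    rw [h1, Measure.map_id]
  have hfst' : (Ψ'.map (Stmt4Aux.Hm d)).map Prod.fst = η := by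
    rw [Measure.map_map measurable_fst hHm_meas]
    have h1 : (Prod.fst ∘ Stmt4Aux.Hm d) = p₁ (E := Rd d) (F := Rd d) := rfl
    rw [h1]
    exact hPT'.2.2.1
  have he' : (Ψ'.map (Stmt4Aux.Hm d)).map e = γ := by
    rw [Measure.map_map he_cont.measurable hHm_meas]
    have h1 : (e ∘ Stmt4Aux.Hm d) = ev (E := Rd d × Rd d) 0 := rfl
    rw [h1]
    exact hPT'.2.2.2
  have hlam_eq : Ψ'.map (Stmt4Aux.Hm d) = lam0 := by
    ext B hB
    rw [hcoup _ hfst' he' B hB, ← hcoup lam0 hlam0_fst hlam0_e B hB]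
  rw [hPsi'_eq, hlam_eq]

end
end

section
/- Let µ, ν be Borel probability measures on ℝ^d with finite second moments, γ_φ a tangent element at µ and γ_ψ a tangent element at ν. Then W₂(γ_φ, γ_ψ)² ≤ W₂(µ,ν)² + E((µ,γ_φ),(ν,γ_ψ)), where on the left W₂ is the 2-Wasserstein distance on ℝ^d × ℝ^d with its Euclidean norm, and E((µ,γ_φ),(ν,γ_ψ)) is the infimum, over all geodesic paths η from µ to ν and all parallel transports Ψ of γ_φ along η, of d_ν((e₁)_#Ψ, γ_ψ)². -/
open MeasureTheory
open scoped ENNReal NNReal unitInterval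

noncomputable section

/-- Squared 2-Wasserstein distance between measures on `ℝ^d` (Euclidean cost). -/
def W2sq {d : ℕ} (μ ν : Measure (Rd d)) : ℝ≥0∞ :=
  ⨅ (γ : Measure (Rd d × Rd d)) (_ : γ.map Prod.fst = μ) (_ : γ.map Prod.snd = ν),
    ∫⁻ p, (‖p.1 - p.2‖₊ : ℝ≥0∞) ^ 2 ∂γ

/-- Squared distance `d_µ(γ, γ')²` between two tangent elements over the same base
measure: infimum of `∫ |z - z'|²` over measures on `ℝ^d × ℝ^d × ℝ^d` whose
`(x,z)`-marginal is `γ` and whose `(x,z')`-marginal is `γ'`. -/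
def dsq {d : ℕ} (γ γ' : Measure (Rd d × Rd d)) : ℝ≥0∞ :=
  ⨅ (Θ : Measure (Rd d × Rd d × Rd d))
    (_ : Θ.map (fun p => (p.1, p.2.1)) = γ)
    (_ : Θ.map (fun p => (p.1, p.2.2)) = γ'),
    ∫⁻ p, (‖p.2.1 - p.2.2‖₊ : ℝ≥0∞) ^ 2 ∂Θ

/-- The affine interpolation curve `t ↦ (1-t)x + ty`. -/
def geodCurve {d : ℕ} (x y : Rd d) : Curves (Rd d) :=
  ⟨fun t => (1 - (t : ℝ)) • x + (t : ℝ) • y, by fun_prop⟩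

/-- `η` is a geodesic path from `μ` to `ν`: it is the law of `t ↦ (1-t)X + tY`
for `(X, Y)` an optimal coupling for `W₂(μ, ν)`. -/
def IsGeodesicPath {d : ℕ} (μ ν : Measure (Rd d)) (η : Measure (Curves (Rd d))) : Prop :=
  ∃ g : Measure (Rd d × Rd d),
    g.map Prod.fst = μ ∧ g.map Prod.snd = ν ∧
    (∫⁻ p, (‖p.1 - p.2‖₊ : ℝ≥0∞) ^ 2 ∂g) = W2sq μ ν ∧
    η = g.map (fun p => geodCurve p.1 p.2)


/-- Squared 2-Wasserstein distance between measures on `ℝ^d × ℝ^d`, where the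
latter is endowed with its Euclidean norm. -/
def W2sqProd {d : ℕ} (Γ₁ Γ₂ : Measure (Rd d × Rd d)) : ℝ≥0∞ :=
  ⨅ (γ : Measure ((Rd d × Rd d) × (Rd d × Rd d)))
    (_ : γ.map Prod.fst = Γ₁) (_ : γ.map Prod.snd = Γ₂),
    ∫⁻ p, ((‖p.1.1 - p.2.1‖₊ : ℝ≥0∞) ^ 2 + (‖p.1.2 - p.2.2‖₊ : ℝ≥0∞) ^ 2) ∂γ

/-- The quantity `E((µ,γφ),(ν,γψ))`: infimum over geodesic paths from `µ` to `ν`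
and parallel transports `Ψ` of `γφ` along them of `d_ν((e₁)_#Ψ, γψ)²`. -/
def Ecal {d : ℕ} (μ ν : Measure (Rd d)) (γφ γψ : Measure (Rd d × Rd d)) : ℝ≥0∞ :=
  ⨅ (η : Measure (Curves (Rd d))) (_ : IsGeodesicPath μ ν η)
    (Ψ : Measure (Curves (Rd d × Rd d))) (_ : IsParallelTransport γφ η Ψ),
    dsq (Ψ.map (ev 1)) γψ


section Helpers
open MeasureTheory ProbabilityTheory

lemma map_compProd_prod_fst {α β γ : Type*} [MeasurableSpace α] [MeasurableSpace β]
    [MeasurableSpace γ] (μ : Measure α) [SFinite μ] (κ : Kernel α β) [IsMarkovKernel κ]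
    (η : Kernel α γ) [IsMarkovKernel η] :
    (μ ⊗ₘ (κ ×ₖ η)).map (fun p => (p.1, p.2.1)) = μ ⊗ₘ κ := by
  ext s hs
  rw [Measure.map_apply (by fun_prop) hs,
    Measure.compProd_apply (hs.preimage (by fun_prop)), Measure.compProd_apply hs]
  congr 1
  ext a
  have h1 := Kernel.fst_apply' (κ ×ₖ η) a (measurable_prodMk_left (x := a) hs)
  rw [Kernel.fst_prod] at h1
  exact h1.symm

lemma map_compProd_prod_snd {α β γ : Type*} [MeasurableSpace α] [MeasurableSpace β]
    [MeasurableSpace γ] (μ : Measure α) [SFinite μ] (κ : Kernel α β) [IsMarkovKernel κ]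
    (η : Kernel α γ) [IsMarkovKernel η] :
    (μ ⊗ₘ (κ ×ₖ η)).map (fun p => (p.1, p.2.2)) = μ ⊗ₘ η := by
  ext s hs
  rw [Measure.map_apply (by fun_prop) hs,
    Measure.compProd_apply (hs.preimage (by fun_prop)), Measure.compProd_apply hs]
  congr 1
  ext a
  have h1 := Kernel.snd_apply' (κ ×ₖ η) a (measurable_prodMk_left (x := a) hs)
  rw [Kernel.snd_prod] at h1
  exact h1.symm

end Helpers

open ProbabilityTheory in
set_option synthInstance.maxHeartbeats 1000000 in
set_option maxHeartbeats 1000000 in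
theorem stmt10 {d : ℕ} (μ ν : Measure (Rd d))
    [IsProbabilityMeasure μ] [IsProbabilityMeasure ν] (hμ : FinSM μ) (hν : FinSM ν)
    (γφ γψ : Measure (Rd d × Rd d)) (hφ : IsTangent μ γφ) (hψ : IsTangent ν γψ) :
    W2sqProd γφ γψ ≤ W2sq μ ν + Ecal μ ν γφ γψ := by
  rw [W2sqProd, Ecal]
  rw [ENNReal.add_iInf]; refine le_iInf fun η => ?_
  rw [ENNReal.add_iInf]; refine le_iInf fun hη => ?_
  rw [ENNReal.add_iInf]; refine le_iInf fun Ψ => ?_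
  rw [ENNReal.add_iInf]; refine le_iInf fun hΨ => ?_
  rw [dsq]
  rw [ENNReal.add_iInf]; refine le_iInf fun Θ => ?_
  rw [ENNReal.add_iInf]; refine le_iInf fun hΘ1 => ?_
  rw [ENNReal.add_iInf]; refine le_iInf fun hΘ2 => ?_
  obtain ⟨g, hgfst, hgsnd, hgcost, hgeq⟩ := hη
  obtain ⟨hΨprob, hΨconst, hΨp₁, hΨ0⟩ := hΨ
  haveI := hΨprob
  have hc0 : Continuous (fun ψ : Curves (Rd d × Rd d) => ψ 0) := continuous_eval_const 0
  have hc1 : Continuous (fun ψ : Curves (Rd d × Rd d) => ψ 1) := continuous_eval_const 1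
  have hd0 : Continuous (fun c : Curves (Rd d) => c 0) := continuous_eval_const 0
  have hd1 : Continuous (fun c : Curves (Rd d) => c 1) := continuous_eval_const 1
  have hp₁ : Measurable (p₁ (E := Rd d) (F := Rd d)) := by
    have h : (p₁ (E := Rd d) (F := Rd d)) =
        fun ψ => ContinuousMap.comp ⟨Prod.fst, continuous_fst⟩ ψ := by
      funext ψ; ext t; rfl
    rw [h]
    exact (ContinuousMap.continuous_postcomp _).measurable
  set f10 : Curves (Rd d × Rd d) → (Rd d × Rd d) × Rd d :=
    fun ψ => (((ψ 1).1, (ψ 0).2), (ψ 0).1) with hf10def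
  have hf10 : Measurable f10 := (((hc1.fst).prodMk (hc0.snd)).prodMk (hc0.fst)).measurable
  set m : Measure ((Rd d × Rd d) × Rd d) := Ψ.map f10 with hmdef
  haveI : IsProbabilityMeasure m := Measure.isProbabilityMeasure_map hf10.aemeasurable
  have hev1 : Measurable (ev (E := Rd d × Rd d) 1) := hc1.measurable
  have hev0 : Measurable (ev (E := Rd d × Rd d) 0) := hc0.measurable
  have hmfst : m.fst = Ψ.map (ev 1) := by
    show m.map Prod.fst = _
    rw [hmdef, Measure.map_map measurable_fst hf10]
    refine Measure.map_congr ?_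
    filter_upwards [hΨconst] with ψ h
    show ((ψ 1).1, (ψ 0).2) = ψ 1
    rw [← h 1]
  set fΘ : (Rd d × Rd d × Rd d) → (Rd d × Rd d) × Rd d :=
    fun p => ((p.1, p.2.1), p.2.2) with hfΘdef
  have hfΘ : Measurable fΘ := by fun_prop
  haveI : IsProbabilityMeasure (Ψ.map (ev 1)) := Measure.isProbabilityMeasure_map hev1.aemeasurable
  haveI : IsProbabilityMeasure Θ := by
    constructor
    have h : Θ.map (fun p => (p.1, p.2.1)) Set.univ = 1 := by
      rw [hΘ1]; exact measure_univ
    rwa [Measure.map_apply (by fun_prop) MeasurableSet.univ, Set.preimage_univ] at h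
  set Θ' : Measure ((Rd d × Rd d) × Rd d) := Θ.map fΘ with hΘ'def
  haveI : IsProbabilityMeasure Θ' := Measure.isProbabilityMeasure_map hfΘ.aemeasurable
  have hΘ'fst : Θ'.fst = Ψ.map (ev 1) := by
    show Θ'.map Prod.fst = _
    rw [hΘ'def, Measure.map_map measurable_fst hfΘ]
    exact hΘ1
  set glued : Measure ((Rd d × Rd d) × Rd d × Rd d) :=
    m.fst ⊗ₘ (m.condKernel ×ₖ Θ'.condKernel) with hglueddef
  have hglued1 : glued.map (fun p => (p.1, p.2.1)) = m := by
    rw [hglueddef, map_compProd_prod_fst, Measure.disintegrate _ _]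
  have hglued2 : glued.map (fun p => (p.1, p.2.2)) = Θ' := by
    rw [hglueddef, map_compProd_prod_snd, hmfst, ← hΘ'fst, Measure.disintegrate _ _]
  set q : ((Rd d × Rd d) × Rd d × Rd d) → ((Rd d × Rd d) × (Rd d × Rd d)) :=
    fun p => ((p.2.1, p.1.2), (p.1.1, p.2.2)) with hqdef
  have hq : Measurable q := by fun_prop
  set Γ := glued.map q with hΓdef
  have hΓ1 : Γ.map Prod.fst = γφ := by
    rw [hΓdef, Measure.map_map measurable_fst hq]
    have e1 : (Prod.fst ∘ q) = (fun r : (Rd d × Rd d) × Rd d => (r.2, r.1.2)) ∘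
        (fun p : (Rd d × Rd d) × Rd d × Rd d => (p.1, p.2.1)) := rfl
    rw [e1, ← Measure.map_map (f := fun p : (Rd d × Rd d) × Rd d × Rd d => (p.1, p.2.1))
      (by fun_prop) (by fun_prop), hglued1, hmdef, Measure.map_map (by fun_prop) hf10]
    rw [show ((fun r : (Rd d × Rd d) × Rd d => (r.2, r.1.2)) ∘ f10)
        = ev (E := Rd d × Rd d) 0 from funext fun ψ => rfl]
    exact hΨ0
  have hΓ2 : Γ.map Prod.snd = γψ := by
    rw [hΓdef, Measure.map_map measurable_snd hq]
    have e1 : (Prod.snd ∘ q) = (fun r : (Rd d × Rd d) × Rd d => (r.1.1, r.2)) ∘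
        (fun p : (Rd d × Rd d) × Rd d × Rd d => (p.1, p.2.2)) := rfl
    rw [e1, ← Measure.map_map (f := fun p : (Rd d × Rd d) × Rd d × Rd d => (p.1, p.2.2))
      (by fun_prop) (by fun_prop), hglued2, hΘ'def, Measure.map_map (by fun_prop) hfΘ]
    rw [show ((fun r : (Rd d × Rd d) × Rd d => (r.1.1, r.2)) ∘ fΘ)
        = (fun p : Rd d × Rd d × Rd d => (p.1, p.2.2)) from rfl]
    exact hΘ2
  refine le_trans (iInf_le_of_le Γ (iInf_le_of_le hΓ1 (iInf_le _ hΓ2))) ?_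
  have hcost : ∫⁻ p, ((‖p.1.1 - p.2.1‖₊ : ℝ≥0∞) ^ 2 + (‖p.1.2 - p.2.2‖₊ : ℝ≥0∞) ^ 2) ∂Γ
      = W2sq μ ν + ∫⁻ p, (‖p.2.1 - p.2.2‖₊ : ℝ≥0∞) ^ 2 ∂Θ := by
    have hm1 : Measurable fun p : ((Rd d × Rd d) × Rd d × Rd d) =>
        (‖p.2.1 - p.1.1‖₊ : ℝ≥0∞) ^ 2 := by fun_prop
    have hm2 : Measurable fun p : ((Rd d × Rd d) × Rd d × Rd d) =>
        (‖p.1.2 - p.2.2‖₊ : ℝ≥0∞) ^ 2 := by fun_prop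
    rw [hΓdef, lintegral_map (by fun_prop) hq]
    have e0 : ∫⁻ p, ((‖(q p).1.1 - (q p).2.1‖₊ : ℝ≥0∞) ^ 2
          + (‖(q p).1.2 - (q p).2.2‖₊ : ℝ≥0∞) ^ 2) ∂glued
        = ∫⁻ p, (‖p.2.1 - p.1.1‖₊ : ℝ≥0∞) ^ 2 ∂glued
          + ∫⁻ p, (‖p.1.2 - p.2.2‖₊ : ℝ≥0∞) ^ 2 ∂glued := lintegral_add_left hm1 _
    rw [e0]
    have hterm1 : ∫⁻ p, (‖p.2.1 - p.1.1‖₊ : ℝ≥0∞) ^ 2 ∂glued = W2sq μ ν := by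
      have e : ∫⁻ p, (‖p.2.1 - p.1.1‖₊ : ℝ≥0∞) ^ 2 ∂glued
          = ∫⁻ r, (‖r.2 - r.1.1‖₊ : ℝ≥0∞) ^ 2
            ∂(glued.map (fun p : (Rd d × Rd d) × Rd d × Rd d => (p.1, p.2.1))) := by
        rw [lintegral_map (by fun_prop) (by fun_prop)]
      rw [e, hglued1, hmdef, lintegral_map (by fun_prop) hf10]
      have hF : Measurable fun c : Curves (Rd d) => (‖c 0 - c 1‖₊ : ℝ≥0∞) ^ 2 :=
        ((hd0.sub hd1).measurable.nnnorm.coe_nnreal_ennreal).pow_const 2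
      have e2 : ∫⁻ ψ, (‖(f10 ψ).2 - (f10 ψ).1.1‖₊ : ℝ≥0∞) ^ 2 ∂Ψ
          = ∫⁻ c, (‖c 0 - c 1‖₊ : ℝ≥0∞) ^ 2 ∂(Ψ.map p₁) := by
        rw [lintegral_map hF hp₁]; rfl
      rw [e2, hΨp₁, hgeq]
      have hgeod : Measurable fun p : Rd d × Rd d => geodCurve p.1 p.2 := by
        refine Continuous.measurable ?_
        refine ContinuousMap.continuous_of_continuous_uncurry _ ?_
        simp only [Function.uncurry, geodCurve, ContinuousMap.coe_mk]
        fun_prop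
      rw [lintegral_map hF hgeod, ← hgcost]
      refine lintegral_congr fun p => ?_
      simp [geodCurve]
    have hterm2 : ∫⁻ p, (‖p.1.2 - p.2.2‖₊ : ℝ≥0∞) ^ 2 ∂glued
        = ∫⁻ p, (‖p.2.1 - p.2.2‖₊ : ℝ≥0∞) ^ 2 ∂Θ := by
      have e : ∫⁻ p, (‖p.1.2 - p.2.2‖₊ : ℝ≥0∞) ^ 2 ∂glued
          = ∫⁻ r, (‖r.1.2 - r.2‖₊ : ℝ≥0∞) ^ 2
            ∂(glued.map (fun p : (Rd d × Rd d) × Rd d × Rd d => (p.1, p.2.2))) := by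
        rw [lintegral_map (by fun_prop) (by fun_prop)]
      rw [e, hglued2, hΘ'def, lintegral_map (by fun_prop) hfΘ]
    rw [hterm1, hterm2]
  exact le_of_eq hcost


end
end

section
/- Fix α ∈ (0,1]. Let (U_n)_{n≥0} be a sequence of bounded functions U_n : P₂(ℝ^d) → ℝ, each differentiable at every µ ∈ P₂(ℝ^d), with N(U_n) < ∞ for all n, where N(U) := ‖U‖_∞ + sup_µ (∫|D_µU(µ)|² dµ)^{1/2} + I_α(D_µU). If the sequence (U_n) is Cauchy for N (i.e. N(U_n − U_m) → 0 as n,m → ∞, the differences being differentiable with derivative D_µU_n(µ) − D_µU_m(µ)), then there exists a bounded function U : P₂(ℝ^d) → ℝ, differentiable at every µ, with N(U) < ∞, such that N(U_n − U) → 0 as n → ∞. In other words, the space of bounded C^{1,α} functions on P₂(ℝ^d) equipped with the norm N is complete. -/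
open MeasureTheory
open scoped ENNReal NNReal unitInterval

noncomputable section

open scoped RealInnerProductSpace

/-- The space `P₂(ℝ^d)` of Borel probability measures with finite second moment. -/
def P2 (d : ℕ) := {μ : Measure (Rd d) // IsProbabilityMeasure μ ∧ FinSM μ}

/-- `C₂(Γ) = (∫ |x-y|² dΓ)^{1/2}`. -/
def C2 {d : ℕ} (Γ : Measure (Rd d × Rd d)) : ℝ :=
  Real.sqrt (∫ p, ‖p.1 - p.2‖ ^ 2 ∂Γ)

/-- `Γ` is a coupling of `μ` and `ν`. -/
def IsCoupling {d : ℕ} (μ ν : P2 d) (Γ : Measure (Rd d × Rd d)) : Prop :=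
  Γ.map Prod.fst = μ.1 ∧ Γ.map Prod.snd = ν.1

/-- `U` is differentiable at `μ ∈ P₂(ℝ^d)` with derivative `φ`. -/
def IsDerivAt {d : ℕ} (U : P2 d → ℝ) (μ : P2 d) (φ : Rd d → Rd d) : Prop :=
  Measurable φ ∧ (∫⁻ x, (‖φ x‖₊ : ℝ≥0∞) ^ 2 ∂μ.1) < ⊤ ∧
  ∃ ω : ℝ → ℝ, (∀ r, 0 ≤ ω r) ∧ ω 0 = 0 ∧ ContinuousAt ω 0 ∧ Monotone ω ∧
    ∀ ν : P2 d, ∀ Γ : Measure (Rd d × Rd d), IsCoupling μ ν Γ →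
      |U ν - U μ - ∫ p, ⟪p.2 - p.1, φ p.1⟫ ∂Γ| ≤ C2 Γ * ω (C2 Γ)

/-- The Hölder seminorm `I_α` of a derivative field `DU`: supremum over pairs of
measures and couplings `Γ` between them (with `0 < C₂(Γ) ≤ 1` when `α < 1`, and
`0 < C₂(Γ)` when `α = 1`) of
`(∫ |DU(µ)(x) − DU(ν)(y)|² dΓ)^{1/2} / C₂(Γ)^α`. -/
def Ialpha {d : ℕ} (α : ℝ) (DU : P2 d → Rd d → Rd d) : ℝ≥0∞ :=
  ⨆ (μ : P2 d) (ν : P2 d) (Γ : Measure (Rd d × Rd d))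
    (_ : IsCoupling μ ν Γ) (_ : 0 < C2 Γ) (_ : α = 1 ∨ C2 Γ ≤ 1),
    (∫⁻ p, (‖DU μ p.1 - DU ν p.2‖₊ : ℝ≥0∞) ^ 2 ∂Γ) ^ (1/2 : ℝ)
      / ENNReal.ofReal (C2 Γ) ^ α

/-- The `C^{1,α}` norm `N(U) = ‖U‖_∞ + sup_µ ‖D_µU(µ)‖_{L²_µ} + I_α(D_µU)`,
valued in `[0,∞]`. -/
def Nnorm {d : ℕ} (α : ℝ) (U : P2 d → ℝ) (DU : P2 d → Rd d → Rd d) : ℝ≥0∞ :=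
  (⨆ μ : P2 d, (‖U μ‖₊ : ℝ≥0∞))
  + (⨆ μ : P2 d, (∫⁻ x, (‖DU μ x‖₊ : ℝ≥0∞) ^ 2 ∂μ.1) ^ (1/2 : ℝ))
  + Ialpha α DU


section Helpers

variable {d : ℕ}

lemma sq_nnnorm_add_le {E : Type*} [NormedAddCommGroup E] (x y : E) :
    (‖x + y‖₊ : ℝ≥0∞) ^ 2 ≤ 3 * (‖x‖₊ : ℝ≥0∞) ^ 2 + 3 * (‖y‖₊ : ℝ≥0∞) ^ 2 := by
  have h1 : (‖x + y‖₊ : ℝ≥0∞) ≤ (‖x‖₊ : ℝ≥0∞) + ‖y‖₊ := by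
    exact_mod_cast nnnorm_add_le x y
  calc (‖x + y‖₊ : ℝ≥0∞) ^ 2 ≤ ((‖x‖₊ : ℝ≥0∞) + ‖y‖₊) ^ 2 := pow_le_pow_left' h1 2
    _ ≤ 3 * (‖x‖₊ : ℝ≥0∞) ^ 2 + 3 * (‖y‖₊ : ℝ≥0∞) ^ 2 := by
        set a := (‖x‖₊ : ℝ≥0∞) with ha; set b := (‖y‖₊ : ℝ≥0∞) with hb
        have hab : a * b ≤ a ^ 2 + b ^ 2 := by
          rcases le_total a b with h | h
          · have : a * b ≤ b * b := by gcongr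
            calc a * b ≤ b ^ 2 := by rwa [pow_two]
              _ ≤ a ^ 2 + b ^ 2 := le_add_self
          · have : a * b ≤ a * a := by gcongr
            calc a * b ≤ a ^ 2 := by rwa [pow_two]
              _ ≤ a ^ 2 + b ^ 2 := le_self_add
        calc (a + b) ^ 2 = a ^ 2 + (a * b + a * b) + b ^ 2 := by ring
          _ ≤ a ^ 2 + ((a ^ 2 + b ^ 2) + (a ^ 2 + b ^ 2)) + b ^ 2 := by gcongr
          _ = 3 * a ^ 2 + 3 * b ^ 2 := by ring

lemma coupling_isProb {μ ν : P2 d} {Γ : Measure (Rd d × Rd d)} (h : IsCoupling μ ν Γ) :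
    IsProbabilityMeasure Γ := by
  haveI := μ.2.1
  constructor
  have : Γ.map Prod.fst Set.univ = Γ Set.univ := by
    rw [Measure.map_apply measurable_fst MeasurableSet.univ]; rfl
  rw [← this, h.1]; exact measure_univ

lemma lintegral_fst {μ ν : P2 d} {Γ : Measure (Rd d × Rd d)} (h : IsCoupling μ ν Γ)
    {f : Rd d → ℝ≥0∞} (hf : Measurable f) :
    ∫⁻ p, f p.1 ∂Γ = ∫⁻ x, f x ∂μ.1 := by
  rw [← h.1, lintegral_map hf measurable_fst]

lemma lintegral_snd {μ ν : P2 d} {Γ : Measure (Rd d × Rd d)} (h : IsCoupling μ ν Γ)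
    {f : Rd d → ℝ≥0∞} (hf : Measurable f) :
    ∫⁻ p, f p.2 ∂Γ = ∫⁻ x, f x ∂ν.1 := by
  rw [← h.2, lintegral_map hf measurable_snd]

lemma coupling_sqdist_lintegral_lt_top {μ ν : P2 d} {Γ : Measure (Rd d × Rd d)}
    (h : IsCoupling μ ν Γ) :
    ∫⁻ p, (‖p.1 - p.2‖₊ : ℝ≥0∞) ^ 2 ∂Γ < ⊤ := by
  have hb : ∀ p : Rd d × Rd d, (‖p.1 - p.2‖₊ : ℝ≥0∞) ^ 2
      ≤ 3 * (‖p.1‖₊ : ℝ≥0∞) ^ 2 + 3 * (‖p.2‖₊ : ℝ≥0∞) ^ 2 := by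
    intro p
    have := sq_nnnorm_add_le p.1 (-p.2)
    simpa [sub_eq_add_neg] using this
  calc ∫⁻ p, (‖p.1 - p.2‖₊ : ℝ≥0∞) ^ 2 ∂Γ
      ≤ ∫⁻ p, (3 * (‖p.1‖₊ : ℝ≥0∞) ^ 2 + 3 * (‖p.2‖₊ : ℝ≥0∞) ^ 2) ∂Γ :=
        lintegral_mono hb
    _ = 3 * ∫⁻ p, (‖p.1‖₊ : ℝ≥0∞) ^ 2 ∂Γ + 3 * ∫⁻ p, (‖p.2‖₊ : ℝ≥0∞) ^ 2 ∂Γ := by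
        rw [lintegral_add_left, lintegral_const_mul, lintegral_const_mul]
        · exact ((measurable_snd (α := Rd d) (β := Rd d)).nnnorm.coe_nnreal_ennreal).pow_const 2
        · exact ((measurable_fst (α := Rd d) (β := Rd d)).nnnorm.coe_nnreal_ennreal).pow_const 2
        · exact (((measurable_fst (α := Rd d) (β := Rd d)).nnnorm.coe_nnreal_ennreal).pow_const 2).const_mul 3
    _ < ⊤ := by
        have e1 := lintegral_fst (f := fun x : Rd d => (‖x‖₊ : ℝ≥0∞) ^ 2) h
          (measurable_nnnorm.coe_nnreal_ennreal.pow_const 2)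
        have e2 := lintegral_snd (f := fun x : Rd d => (‖x‖₊ : ℝ≥0∞) ^ 2) h
          (measurable_nnnorm.coe_nnreal_ennreal.pow_const 2)
        rw [e1, e2]
        have h1 := μ.2.2
        have h2 := ν.2.2
        unfold FinSM at h1 h2
        exact ENNReal.add_lt_top.2 ⟨ENNReal.mul_lt_top (by norm_num) h1,
          ENNReal.mul_lt_top (by norm_num) h2⟩

end Helpers

section Helpers2

variable {d : ℕ} {X : Type*} [MeasurableSpace X]

lemma eLpNorm_two_eq (m : Measure X) (f : X → Rd d) :
    eLpNorm f 2 m = (∫⁻ x, (‖f x‖₊ : ℝ≥0∞) ^ 2 ∂m) ^ (1/2 : ℝ) := by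
  rw [eLpNorm_eq_lintegral_rpow_enorm_toReal two_ne_zero ENNReal.ofNat_ne_top]
  have h2 : ((2 : ℝ≥0∞)).toReal = (2 : ℝ) := by norm_num
  rw [h2]
  congr 1
  refine lintegral_congr fun x => ?_
  rw [← ENNReal.rpow_natCast]
  norm_num
  rfl

lemma memLp_two (m : Measure X) (f : X → Rd d) (hf : Measurable f)
    (h : ∫⁻ x, (‖f x‖₊ : ℝ≥0∞) ^ 2 ∂m < ⊤) : MemLp f 2 m := by
  refine ⟨hf.aestronglyMeasurable, ?_⟩
  rw [eLpNorm_two_eq]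
  exact ENNReal.rpow_lt_top_of_nonneg (by norm_num) h.ne

lemma integral_normsq_eq (m : Measure X) (f : X → Rd d) (hf : AEStronglyMeasurable f m) :
    ∫ x, ‖f x‖ ^ 2 ∂m = (∫⁻ x, (‖f x‖₊ : ℝ≥0∞) ^ 2 ∂m).toReal := by
  rw [integral_eq_lintegral_of_nonneg_ae (Filter.Eventually.of_forall fun x => sq_nonneg _)
    ((continuous_pow 2).comp_aestronglyMeasurable hf.norm)]
  congr 1
  refine lintegral_congr fun x => ?_
  rw [ENNReal.ofReal_pow (norm_nonneg _), ofReal_norm, enorm_eq_nnnorm]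

lemma sqrt_integral_normsq_eq (m : Measure X) (f : X → Rd d) (hf : AEStronglyMeasurable f m) :
    Real.sqrt (∫ x, ‖f x‖ ^ 2 ∂m) = ((∫⁻ x, (‖f x‖₊ : ℝ≥0∞) ^ 2 ∂m) ^ (1/2 : ℝ)).toReal := by
  rw [integral_normsq_eq m f hf, ← ENNReal.toReal_rpow, Real.sqrt_eq_rpow]

lemma abs_integral_inner_le (m : Measure X) (f g : X → Rd d)
    (hf : Measurable f) (hg : Measurable g)
    (hf2 : ∫⁻ x, (‖f x‖₊ : ℝ≥0∞) ^ 2 ∂m < ⊤) (hg2 : ∫⁻ x, (‖g x‖₊ : ℝ≥0∞) ^ 2 ∂m < ⊤) :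
    |∫ x, ⟪f x, g x⟫ ∂m| ≤ ((∫⁻ x, (‖f x‖₊ : ℝ≥0∞) ^ 2 ∂m) ^ (1/2 : ℝ)).toReal *
      ((∫⁻ x, (‖g x‖₊ : ℝ≥0∞) ^ 2 ∂m) ^ (1/2 : ℝ)).toReal := by
  have hfm : MemLp f 2 m := memLp_two m f hf hf2
  have hgm : MemLp g 2 m := memLp_two m g hg hg2
  set F := hfm.toLp f
  set G := hgm.toLp g
  have hFG : ⟪F, G⟫ = ∫ x, ⟪f x, g x⟫ ∂m := by
    rw [MeasureTheory.L2.inner_def]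
    refine integral_congr_ae ?_
    filter_upwards [hfm.coeFn_toLp, hgm.coeFn_toLp] with x h1 h2
    rw [h1, h2]
  rw [← hFG]
  calc |⟪F, G⟫| ≤ ‖F‖ * ‖G‖ := abs_real_inner_le_norm F G
    _ = _ := by
        rw [MeasureTheory.Lp.norm_toLp f hfm, MeasureTheory.Lp.norm_toLp g hgm, eLpNorm_two_eq, eLpNorm_two_eq]

lemma C2_nonneg (Γ : Measure (Rd d × Rd d)) : 0 ≤ C2 Γ := Real.sqrt_nonneg _

lemma C2_eq_toReal {μ ν : P2 d} {Γ : Measure (Rd d × Rd d)} (h : IsCoupling μ ν Γ) :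
    C2 Γ = ((∫⁻ p, (‖p.1 - p.2‖₊ : ℝ≥0∞) ^ 2 ∂Γ) ^ (1/2 : ℝ)).toReal := by
  unfold C2
  exact sqrt_integral_normsq_eq Γ (fun p => p.1 - p.2)
    (measurable_fst.sub measurable_snd).aestronglyMeasurable

lemma coupling_inner_le {μ ν : P2 d} {Γ : Measure (Rd d × Rd d)} (h : IsCoupling μ ν Γ)
    (φ : Rd d → Rd d) (hφ : Measurable φ) (hφ2 : ∫⁻ x, (‖φ x‖₊ : ℝ≥0∞) ^ 2 ∂μ.1 < ⊤) :
    |∫ p, ⟪p.2 - p.1, φ p.1⟫ ∂Γ| ≤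
      C2 Γ * ((∫⁻ x, (‖φ x‖₊ : ℝ≥0∞) ^ 2 ∂μ.1) ^ (1/2 : ℝ)).toReal := by
  have hmar := lintegral_fst (f := fun x => (‖φ x‖₊ : ℝ≥0∞) ^ 2) h
    (hφ.nnnorm.coe_nnreal_ennreal.pow_const 2)
  have hsub : ∫⁻ p : Rd d × Rd d, (‖p.2 - p.1‖₊ : ℝ≥0∞) ^ 2 ∂Γ
      = ∫⁻ p : Rd d × Rd d, (‖p.1 - p.2‖₊ : ℝ≥0∞) ^ 2 ∂Γ := by
    refine lintegral_congr fun p => by rw [← neg_sub p.1 p.2, nnnorm_neg]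
  have := abs_integral_inner_le Γ (fun p => p.2 - p.1) (fun p => φ p.1)
    (measurable_snd.sub measurable_fst) (hφ.comp measurable_fst)
    (by rw [hsub]; exact coupling_sqdist_lintegral_lt_top h)
    (by rw [hmar]; exact hφ2)
  rw [C2_eq_toReal h]
  calc |∫ p, ⟪p.2 - p.1, φ p.1⟫ ∂Γ| ≤ _ := this
    _ = _ := by rw [hsub, hmar]

end Helpers2

section Interp

variable {d : ℕ}

/-- Linear interpolation map. -/
def interp (d : ℕ) (t : ℝ) (p : Rd d × Rd d) : Rd d := (1 - t) • p.1 + t • p.2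

lemma interp_meas (t : ℝ) : Measurable (interp d t) :=
  (measurable_fst.const_smul (1 - t)).add (measurable_snd.const_smul t)

lemma interp_zero : interp d 0 = Prod.fst := by
  funext p; simp [interp]

lemma interp_one : interp d 1 = Prod.snd := by
  funext p; simp [interp]

lemma interp_sub (t s : ℝ) (p : Rd d × Rd d) :
    interp d t p - interp d s p = (t - s) • (p.2 - p.1) := by
  simp only [interp]
  module

lemma coupling_moment_fst {μ ν : P2 d} {Γ : Measure (Rd d × Rd d)} (h : IsCoupling μ ν Γ) :
    ∫⁻ p, (‖p.1‖₊ : ℝ≥0∞) ^ 2 ∂Γ < ⊤ := by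
  rw [lintegral_fst (f := fun x : Rd d => (‖x‖₊ : ℝ≥0∞) ^ 2) h
    (measurable_nnnorm.coe_nnreal_ennreal.pow_const 2)]
  exact μ.2.2

lemma coupling_moment_snd {μ ν : P2 d} {Γ : Measure (Rd d × Rd d)} (h : IsCoupling μ ν Γ) :
    ∫⁻ p, (‖p.2‖₊ : ℝ≥0∞) ^ 2 ∂Γ < ⊤ := by
  rw [lintegral_snd (f := fun x : Rd d => (‖x‖₊ : ℝ≥0∞) ^ 2) h
    (measurable_nnnorm.coe_nnreal_ennreal.pow_const 2)]
  exact ν.2.2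

lemma interp_moment {μ ν : P2 d} {Γ : Measure (Rd d × Rd d)} (h : IsCoupling μ ν Γ) (t : ℝ) :
    ∫⁻ p, (‖interp d t p‖₊ : ℝ≥0∞) ^ 2 ∂Γ < ⊤ := by
  have hb : ∀ p : Rd d × Rd d, (‖interp d t p‖₊ : ℝ≥0∞) ^ 2 ≤
      (‖(1 - t)‖₊ : ℝ≥0∞) ^ 2 * (3 * (‖p.1‖₊ : ℝ≥0∞) ^ 2)
        + (‖t‖₊ : ℝ≥0∞) ^ 2 * (3 * (‖p.2‖₊ : ℝ≥0∞) ^ 2) := by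
    intro p
    calc (‖interp d t p‖₊ : ℝ≥0∞) ^ 2
        ≤ 3 * (‖(1 - t) • p.1‖₊ : ℝ≥0∞) ^ 2 + 3 * (‖t • p.2‖₊ : ℝ≥0∞) ^ 2 :=
          sq_nnnorm_add_le _ _
      _ = (‖(1 - t)‖₊ : ℝ≥0∞) ^ 2 * (3 * (‖p.1‖₊ : ℝ≥0∞) ^ 2)
            + (‖t‖₊ : ℝ≥0∞) ^ 2 * (3 * (‖p.2‖₊ : ℝ≥0∞) ^ 2) := by
          rw [nnnorm_smul, nnnorm_smul]
          push_cast
          ring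
  calc ∫⁻ p, (‖interp d t p‖₊ : ℝ≥0∞) ^ 2 ∂Γ
      ≤ ∫⁻ p, ((‖(1 - t)‖₊ : ℝ≥0∞) ^ 2 * (3 * (‖p.1‖₊ : ℝ≥0∞) ^ 2)
          + (‖t‖₊ : ℝ≥0∞) ^ 2 * (3 * (‖p.2‖₊ : ℝ≥0∞) ^ 2)) ∂Γ := lintegral_mono hb
    _ = (‖(1 - t)‖₊ : ℝ≥0∞) ^ 2 * (3 * ∫⁻ p, (‖p.1‖₊ : ℝ≥0∞) ^ 2 ∂Γ)
          + (‖t‖₊ : ℝ≥0∞) ^ 2 * (3 * ∫⁻ p, (‖p.2‖₊ : ℝ≥0∞) ^ 2 ∂Γ) := by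
        rw [lintegral_add_left, lintegral_const_mul, lintegral_const_mul,
          lintegral_const_mul, lintegral_const_mul]
        · exact ((measurable_snd (α := Rd d) (β := Rd d)).nnnorm.coe_nnreal_ennreal).pow_const 2
        · exact (((measurable_snd (α := Rd d) (β := Rd d)).nnnorm.coe_nnreal_ennreal).pow_const 2).const_mul 3
        · exact ((measurable_fst (α := Rd d) (β := Rd d)).nnnorm.coe_nnreal_ennreal).pow_const 2
        · exact (((measurable_fst (α := Rd d) (β := Rd d)).nnnorm.coe_nnreal_ennreal).pow_const 2).const_mul 3
        · exact ((((measurable_fst (α := Rd d) (β := Rd d)).nnnorm.coe_nnreal_ennreal).pow_const 2).const_mul 3).const_mul _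
    _ < ⊤ := by
        refine ENNReal.add_lt_top.2 ⟨?_, ?_⟩
        · exact ENNReal.mul_lt_top ENNReal.coe_lt_top
            (ENNReal.mul_lt_top (by norm_num) (coupling_moment_fst h))
        · exact ENNReal.mul_lt_top ENNReal.coe_lt_top
            (ENNReal.mul_lt_top (by norm_num) (coupling_moment_snd h))

/-- The interpolated measure, as an element of `P2 d`. -/
def interpP2 {μ ν : P2 d} {Γ : Measure (Rd d × Rd d)} (h : IsCoupling μ ν Γ) (t : ℝ) : P2 d :=
  ⟨Γ.map (interp d t),
    by haveI := coupling_isProb h; exact Measure.isProbabilityMeasure_map (interp_meas t).aemeasurable,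
    by unfold FinSM
       rw [lintegral_map (measurable_nnnorm.coe_nnreal_ennreal.pow_const 2) (interp_meas t)]
       exact interp_moment h t⟩

lemma interpP2_zero {μ ν : P2 d} {Γ : Measure (Rd d × Rd d)} (h : IsCoupling μ ν Γ) :
    interpP2 h 0 = μ := by
  apply Subtype.ext
  show Γ.map (interp d 0) = μ.1
  rw [interp_zero]; exact h.1

lemma interpP2_one {μ ν : P2 d} {Γ : Measure (Rd d × Rd d)} (h : IsCoupling μ ν Γ) :
    interpP2 h 1 = ν := by
  apply Subtype.ext
  show Γ.map (interp d 1) = ν.1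
  rw [interp_one]; exact h.2

end Interp

section KeyLemma

variable {d : ℕ}

lemma interp_coupling {μ ν : P2 d} {Γ : Measure (Rd d × Rd d)} (h : IsCoupling μ ν Γ)
    (t s : ℝ) :
    IsCoupling (interpP2 h t) (interpP2 h s)
      (Γ.map fun p => (interp d t p, interp d s p)) := by
  constructor
  · rw [Measure.map_map measurable_fst ((interp_meas t).prodMk (interp_meas s))]
    rfl
  · rw [Measure.map_map measurable_snd ((interp_meas t).prodMk (interp_meas s))]
    rfl

lemma C2_interp {μ ν : P2 d} {Γ : Measure (Rd d × Rd d)} (h : IsCoupling μ ν Γ) (t s : ℝ) :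
    C2 (Γ.map fun p => (interp d t p, interp d s p)) = |t - s| * C2 Γ := by
  unfold C2
  rw [integral_map (f := fun p : Rd d × Rd d => ‖p.1 - p.2‖ ^ 2) ((interp_meas t).prodMk (interp_meas s)).aemeasurable
    ((measurable_fst.sub measurable_snd).norm.pow_const 2).aestronglyMeasurable]
  have : ∀ p : Rd d × Rd d,
      ‖(interp d t p, interp d s p).1 - (interp d t p, interp d s p).2‖ ^ 2
      = (t - s) ^ 2 * ‖p.1 - p.2‖ ^ 2 := by
    intro p
    show ‖interp d t p - interp d s p‖ ^ 2 = _
    rw [interp_sub, norm_smul, Real.norm_eq_abs, mul_pow, sq_abs, ← norm_neg, neg_sub]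
  rw [integral_congr_ae (Filter.Eventually.of_forall this), integral_const_mul,
    Real.sqrt_mul (sq_nonneg _), Real.sqrt_sq_eq_abs]

lemma integral_inner_interp {μ ν : P2 d} {Γ : Measure (Rd d × Rd d)} (h : IsCoupling μ ν Γ)
    (t s : ℝ) (φ : Rd d → Rd d) (hφ : Measurable φ) :
    ∫ q, ⟪q.2 - q.1, φ q.1⟫ ∂(Γ.map fun p => (interp d t p, interp d s p))
      = (s - t) * ∫ p, ⟪p.2 - p.1, φ (interp d t p)⟫ ∂Γ := by
  have hmi : Measurable fun q : Rd d × Rd d => ⟪q.2 - q.1, φ q.1⟫ := by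
    exact (measurable_snd.sub measurable_fst).inner (hφ.comp measurable_fst)
  rw [integral_map ((interp_meas t).prodMk (interp_meas s)).aemeasurable
    hmi.aestronglyMeasurable]
  have : ∀ p : Rd d × Rd d,
      ⟪(interp d t p, interp d s p).2 - (interp d t p, interp d s p).1,
        φ (interp d t p, interp d s p).1⟫
      = (s - t) * ⟪p.2 - p.1, φ (interp d t p)⟫ := by
    intro p
    show ⟪interp d s p - interp d t p, φ (interp d t p)⟫ = _
    rw [interp_sub, real_inner_smul_left]
  rw [integral_congr_ae (Filter.Eventually.of_forall this), integral_const_mul]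

lemma key_diff_le (W : P2 d → ℝ) (DW : P2 d → Rd d → Rd d)
    (hW : ∀ μ : P2 d, IsDerivAt W μ (DW μ)) (NB : ℝ)
    (hL2 : ∀ ρ : P2 d, ((∫⁻ x, (‖DW ρ x‖₊ : ℝ≥0∞) ^ 2 ∂ρ.1) ^ (1/2 : ℝ)).toReal ≤ NB)
    (μ ν : P2 d) (Γ : Measure (Rd d × Rd d)) (hΓ : IsCoupling μ ν Γ) :
    |W ν - W μ| ≤ NB * C2 Γ := by
  set A := C2 Γ with hA
  have hA0 : 0 ≤ A := C2_nonneg Γ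
  set g : ℝ → ℝ := fun t => W (interpP2 hΓ t) with hgdef
  set h : ℝ → ℝ := fun t => ∫ p, ⟪p.2 - p.1, DW (interpP2 hΓ t) (interp d t p)⟫ ∂Γ with hhdef
  -- second moment of the DW term along Γ
  have hDWmom : ∀ t : ℝ,
      ∫⁻ p, (‖DW (interpP2 hΓ t) (interp d t p)‖₊ : ℝ≥0∞) ^ 2 ∂Γ
        = ∫⁻ x, (‖DW (interpP2 hΓ t) x‖₊ : ℝ≥0∞) ^ 2 ∂(interpP2 hΓ t).1 := by
    intro t
    have : (interpP2 hΓ t).1 = Γ.map (interp d t) := rfl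
    rw [this, lintegral_map ((hW (interpP2 hΓ t)).1.nnnorm.coe_nnreal_ennreal.pow_const 2)
      (interp_meas t)]
  have hsubmom : ∫⁻ p : Rd d × Rd d, (‖p.2 - p.1‖₊ : ℝ≥0∞) ^ 2 ∂Γ
      = ∫⁻ p : Rd d × Rd d, (‖p.1 - p.2‖₊ : ℝ≥0∞) ^ 2 ∂Γ :=
    lintegral_congr fun p => by rw [← neg_sub p.1 p.2, nnnorm_neg]
  -- bound on h
  have hb : ∀ t : ℝ, |h t| ≤ A * NB := by
    intro t
    have hcs := abs_integral_inner_le Γ (fun p => p.2 - p.1)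
      (fun p => DW (interpP2 hΓ t) (interp d t p))
      (measurable_snd.sub measurable_fst) ((hW (interpP2 hΓ t)).1.comp (interp_meas t))
      (by rw [hsubmom]; exact coupling_sqdist_lintegral_lt_top hΓ)
      (by rw [hDWmom t]; exact (hW (interpP2 hΓ t)).2.1)
    calc |h t| ≤ _ := hcs
      _ ≤ A * NB := by
          have h1 : ((∫⁻ p : Rd d × Rd d, (‖p.2 - p.1‖₊ : ℝ≥0∞) ^ 2 ∂Γ) ^ (1/2 : ℝ)).toReal
              = A := by rw [hsubmom, hA, C2_eq_toReal hΓ]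
          rw [h1]
          refine mul_le_mul_of_nonneg_left ?_ hA0
          rw [hDWmom t]
          exact hL2 (interpP2 hΓ t)
  -- g has derivative h everywhere
  have hgd : ∀ t : ℝ, HasDerivAt g (h t) t := by
    intro t
    obtain ⟨hm, hfin, ω, hω0, hω00, hωc, -, hωb⟩ := hW (interpP2 hΓ t)
    rw [hasDerivAt_iff_isLittleO, Asymptotics.isLittleO_iff]
    intro c hc
    obtain ⟨δ, hδ, hδ2⟩ := Metric.continuousAt_iff.1 hωc (c / (A + 1)) (by positivity)
    have hev : ∀ᶠ s in nhds t, |s - t| < δ / (A + 1) := by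
      refine Metric.eventually_nhds_iff.2 ⟨δ / (A + 1), by positivity, fun {s} hs => ?_⟩
      rwa [Real.dist_eq] at hs
    filter_upwards [hev] with s hs
    have key := hωb (interpP2 hΓ s) (Γ.map fun p => (interp d t p, interp d s p))
      (interp_coupling hΓ t s)
    rw [C2_interp hΓ t s, integral_inner_interp hΓ t s _ hm] at key
    have habs : |t - s| = |s - t| := abs_sub_comm t s
    have hr0 : 0 ≤ |s - t| * A := mul_nonneg (abs_nonneg _) hA0
    have hωr : ω (|s - t| * A) ≤ c / (A + 1) := by
      have hlt : |s - t| * A < δ := by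
        calc |s - t| * A ≤ |s - t| * (A + 1) := by nlinarith [abs_nonneg (s - t)]
          _ < δ / (A + 1) * (A + 1) := by
              apply mul_lt_mul_of_pos_right hs; positivity
          _ = δ := by field_simp
      have := hδ2 (by rw [Real.dist_eq, sub_zero, abs_of_nonneg hr0]; exact hlt)
      rw [hω00, Real.dist_eq, sub_zero] at this
      calc ω (|s - t| * A) ≤ |ω (|s - t| * A)| := le_abs_self _
        _ ≤ c / (A + 1) := le_of_lt this
    rw [Real.norm_eq_abs, Real.norm_eq_abs, smul_eq_mul]
    calc |g s - g t - (s - t) * h t| ≤ |t - s| * A * ω (|t - s| * A) := key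
      _ = |s - t| * A * ω (|s - t| * A) := by rw [habs]
      _ ≤ |s - t| * (A + 1) * (c / (A + 1)) := by
          apply mul_le_mul
          · nlinarith [abs_nonneg (s - t)]
          · exact hωr
          · exact hω0 _
          · positivity
      _ = c * |s - t| := by field_simp
  -- h is measurable and bounded hence interval integrable
  have hmeash : Measurable h := by
    have : h = deriv g := funext fun t => ((hgd t).deriv).symm
    rw [this]
    exact measurable_deriv g
  have hint : IntervalIntegrable h MeasureTheory.volume 0 1 := by
    haveI : IsFiniteMeasure (MeasureTheory.volume.restrict (Set.uIoc (0:ℝ) 1)) := by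
      constructor
      rw [Measure.restrict_apply_univ, Set.uIoc_of_le zero_le_one, Real.volume_Ioc]
      exact ENNReal.ofReal_lt_top
    rw [intervalIntegrable_iff]
    refine ⟨hmeash.aestronglyMeasurable.restrict, ?_⟩
    refine HasFiniteIntegral.of_bounded (C := A * NB) (ae_of_all _ fun t => ?_)
    rw [Real.norm_eq_abs]
    exact hb t
  have hftc : ∫ t in (0:ℝ)..1, h t = g 1 - g 0 :=
    intervalIntegral.integral_eq_sub_of_hasDerivAt (fun t _ => hgd t) hint
  have hg1 : g 1 = W ν := by rw [hgdef]; simp only; rw [interpP2_one hΓ]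
  have hg0 : g 0 = W μ := by rw [hgdef]; simp only; rw [interpP2_zero hΓ]
  have : |g 1 - g 0| ≤ A * NB * |1 - (0:ℝ)| := by
    rw [← hftc, ← Real.norm_eq_abs]
    exact intervalIntegral.norm_integral_le_of_norm_le_const fun x _ => by
      rw [Real.norm_eq_abs]; exact hb x
  rw [hg1, hg0] at this
  calc |W ν - W μ| ≤ A * NB * |1 - (0:ℝ)| := this
    _ = NB * A := by simp [mul_comm]
end KeyLemma

section Utils

variable {d : ℕ} {X : Type*} [MeasurableSpace X]

lemma abs_le_of_nnnorm_le {x c : ℝ} (hc : 0 ≤ c)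
    (h : (‖x‖₊ : ℝ≥0∞) ≤ ENNReal.ofReal c) : |x| ≤ c := by
  rw [← enorm_eq_nnnorm, ← ofReal_norm] at h
  rw [← Real.norm_eq_abs]
  exact (ENNReal.ofReal_le_ofReal_iff hc).1 h

lemma nnnorm_le_of_abs_le {x c : ℝ} (h : |x| ≤ c) : (‖x‖₊ : ℝ≥0∞) ≤ ENNReal.ofReal c := by
  rw [← enorm_eq_nnnorm, ← ofReal_norm, Real.norm_eq_abs]
  exact ENNReal.ofReal_le_ofReal h

lemma integrable_inner_of (m : Measure X) (f g : X → Rd d)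
    (hf : Measurable f) (hg : Measurable g)
    (hf2 : ∫⁻ x, (‖f x‖₊ : ℝ≥0∞) ^ 2 ∂m < ⊤) (hg2 : ∫⁻ x, (‖g x‖₊ : ℝ≥0∞) ^ 2 ∂m < ⊤) :
    Integrable (fun x => ⟪f x, g x⟫) m := by
  have hfm : MemLp f 2 m := memLp_two m f hf hf2
  have hgm : MemLp g 2 m := memLp_two m g hg hg2
  have := MeasureTheory.L2.integrable_inner (𝕜 := ℝ) (hfm.toLp f) (hgm.toLp g)
  refine this.congr ?_
  filter_upwards [hfm.coeFn_toLp, hgm.coeFn_toLp] with x h1 h2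
  rw [h1, h2]

lemma nnorm_parts {α : ℝ} {W : P2 d → ℝ} {DW : P2 d → Rd d → Rd d} {c : ℝ≥0∞}
    (h : Nnorm α W DW ≤ c) :
    (∀ ρ : P2 d, (‖W ρ‖₊ : ℝ≥0∞) ≤ c) ∧
    (∀ ρ : P2 d, eLpNorm (DW ρ) 2 ρ.1 ≤ c) ∧ Ialpha α DW ≤ c := by
  unfold Nnorm at h
  refine ⟨fun ρ => ?_, fun ρ => ?_, ?_⟩
  · exact le_trans (le_trans (le_iSup (fun μ : P2 d => (‖W μ‖₊ : ℝ≥0∞)) ρ)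
      (le_trans le_self_add le_self_add)) h
  · rw [eLpNorm_two_eq]
    exact le_trans (le_trans
      (le_iSup (fun μ : P2 d => (∫⁻ x, (‖DW μ x‖₊ : ℝ≥0∞) ^ 2 ∂μ.1) ^ (1/2 : ℝ)) ρ)
      (le_trans le_add_self le_self_add)) h
  · exact le_trans le_add_self h

lemma quotient_le_Ialpha {α : ℝ} {DW : P2 d → Rd d → Rd d} {μ ν : P2 d}
    {Γ : Measure (Rd d × Rd d)} (hc : IsCoupling μ ν Γ) (hpos : 0 < C2 Γ)
    (hone : α = 1 ∨ C2 Γ ≤ 1) :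
    (∫⁻ p, (‖DW μ p.1 - DW ν p.2‖₊ : ℝ≥0∞) ^ 2 ∂Γ) ^ (1/2 : ℝ)
      / ENNReal.ofReal (C2 Γ) ^ α ≤ Ialpha α DW := by
  unfold Ialpha
  exact le_iSup_of_le μ (le_iSup_of_le ν (le_iSup_of_le Γ
    (le_iSup_of_le hc (le_iSup_of_le hpos (le_iSup_of_le hone le_rfl)))))

lemma denom_pos {α : ℝ} (hα : 0 < α) {Γ : Measure (Rd d × Rd d)} (hpos : 0 < C2 Γ) :
    ENNReal.ofReal (C2 Γ) ^ α ≠ 0 ∧ ENNReal.ofReal (C2 Γ) ^ α ≠ ⊤ := by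
  constructor
  · exact (ENNReal.rpow_pos (ENNReal.ofReal_pos.2 hpos) ENNReal.ofReal_ne_top).ne'
  · exact ENNReal.rpow_ne_top_of_nonneg hα.le ENNReal.ofReal_ne_top

end Utils

section Triangle
set_option maxHeartbeats 1000000

variable {d : ℕ}

lemma Ialpha_le_add {α : ℝ} (DW1 DW2 : P2 d → Rd d → Rd d)
    (hm1 : ∀ μ : P2 d, Measurable (DW1 μ)) (hm2 : ∀ μ : P2 d, Measurable (DW2 μ)) :
    Ialpha α DW2 ≤ Ialpha α DW1 + Ialpha α (fun μ x => DW1 μ x - DW2 μ x) := by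
  rw [show Ialpha α DW2 = _ from rfl]
  unfold Ialpha
  refine iSup_le fun μ => iSup_le fun ν => iSup_le fun Γ => iSup_le fun hc =>
    iSup_le fun hpos => iSup_le fun hone => ?_
  have htri : (∫⁻ p, (‖DW2 μ p.1 - DW2 ν p.2‖₊ : ℝ≥0∞) ^ 2 ∂Γ) ^ (1/2 : ℝ)
      ≤ (∫⁻ p, (‖DW1 μ p.1 - DW1 ν p.2‖₊ : ℝ≥0∞) ^ 2 ∂Γ) ^ (1/2 : ℝ)
        + (∫⁻ p, (‖(DW1 μ p.1 - DW2 μ p.1) - (DW1 ν p.2 - DW2 ν p.2)‖₊ : ℝ≥0∞) ^ 2 ∂Γ)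
            ^ (1/2 : ℝ) := by
    rw [← eLpNorm_two_eq, ← eLpNorm_two_eq, ← eLpNorm_two_eq]
    have heq : (fun p : Rd d × Rd d => DW2 μ p.1 - DW2 ν p.2)
        = (fun p : Rd d × Rd d => DW1 μ p.1 - DW1 ν p.2)
          - (fun p : Rd d × Rd d => (DW1 μ p.1 - DW2 μ p.1) - (DW1 ν p.2 - DW2 ν p.2)) := by
      funext p
      simp only [Pi.sub_apply]
      abel
    rw [heq]
    refine eLpNorm_sub_le ?_ ?_ one_le_two
    · exact (((hm1 μ).comp measurable_fst).sub ((hm1 ν).comp measurable_snd)).aestronglyMeasurable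
    · exact ((((hm1 μ).comp measurable_fst).sub ((hm2 μ).comp measurable_fst)).sub
        (((hm1 ν).comp measurable_snd).sub ((hm2 ν).comp measurable_snd))).aestronglyMeasurable
  calc (∫⁻ p, (‖DW2 μ p.1 - DW2 ν p.2‖₊ : ℝ≥0∞) ^ 2 ∂Γ) ^ (1/2 : ℝ)
        / ENNReal.ofReal (C2 Γ) ^ α
      ≤ ((∫⁻ p, (‖DW1 μ p.1 - DW1 ν p.2‖₊ : ℝ≥0∞) ^ 2 ∂Γ) ^ (1/2 : ℝ)
          + (∫⁻ p, (‖(DW1 μ p.1 - DW2 μ p.1) - (DW1 ν p.2 - DW2 ν p.2)‖₊ : ℝ≥0∞) ^ 2 ∂Γ)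
              ^ (1/2 : ℝ)) / ENNReal.ofReal (C2 Γ) ^ α :=
        ENNReal.div_le_div_right htri _
    _ = (∫⁻ p, (‖DW1 μ p.1 - DW1 ν p.2‖₊ : ℝ≥0∞) ^ 2 ∂Γ) ^ (1/2 : ℝ)
            / ENNReal.ofReal (C2 Γ) ^ α
          + (∫⁻ p, (‖(DW1 μ p.1 - DW2 μ p.1) - (DW1 ν p.2 - DW2 ν p.2)‖₊ : ℝ≥0∞) ^ 2 ∂Γ)
              ^ (1/2 : ℝ) / ENNReal.ofReal (C2 Γ) ^ α := ENNReal.add_div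
    _ ≤ _ := add_le_add (quotient_le_Ialpha hc hpos hone)
          (quotient_le_Ialpha (DW := fun μ x => DW1 μ x - DW2 μ x) hc hpos hone)

lemma Nnorm_le_add {α : ℝ} (W1 W2 : P2 d → ℝ) (DW1 DW2 : P2 d → Rd d → Rd d)
    (hm1 : ∀ μ : P2 d, Measurable (DW1 μ)) (hm2 : ∀ μ : P2 d, Measurable (DW2 μ)) :
    Nnorm α W2 DW2 ≤ Nnorm α W1 DW1
      + Nnorm α (fun ρ => W1 ρ - W2 ρ) (fun μ x => DW1 μ x - DW2 μ x) := by
  unfold Nnorm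
  have hA : (⨆ μ : P2 d, (‖W2 μ‖₊ : ℝ≥0∞))
      ≤ (⨆ μ : P2 d, (‖W1 μ‖₊ : ℝ≥0∞)) + ⨆ μ : P2 d, (‖W1 μ - W2 μ‖₊ : ℝ≥0∞) := by
    refine iSup_le fun ρ => ?_
    have h1 : W2 ρ = W1 ρ - (W1 ρ - W2 ρ) := by ring
    calc (‖W2 ρ‖₊ : ℝ≥0∞) = (‖W1 ρ - (W1 ρ - W2 ρ)‖₊ : ℝ≥0∞) := by rw [← h1]
      _ ≤ (‖W1 ρ‖₊ : ℝ≥0∞) + (‖W1 ρ - W2 ρ‖₊ : ℝ≥0∞) := by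
          exact_mod_cast nnnorm_sub_le _ _
      _ ≤ _ := add_le_add (le_iSup (fun μ : P2 d => (‖W1 μ‖₊ : ℝ≥0∞)) ρ)
          (le_iSup (fun μ : P2 d => (‖W1 μ - W2 μ‖₊ : ℝ≥0∞)) ρ)
  have hB : (⨆ μ : P2 d, (∫⁻ x, (‖DW2 μ x‖₊ : ℝ≥0∞) ^ 2 ∂μ.1) ^ (1/2 : ℝ))
      ≤ (⨆ μ : P2 d, (∫⁻ x, (‖DW1 μ x‖₊ : ℝ≥0∞) ^ 2 ∂μ.1) ^ (1/2 : ℝ))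
        + ⨆ μ : P2 d, (∫⁻ x, (‖DW1 μ x - DW2 μ x‖₊ : ℝ≥0∞) ^ 2 ∂μ.1) ^ (1/2 : ℝ) := by
    refine iSup_le fun ρ => ?_
    have h2 : (∫⁻ x, (‖DW2 ρ x‖₊ : ℝ≥0∞) ^ 2 ∂ρ.1) ^ (1/2 : ℝ)
        ≤ (∫⁻ x, (‖DW1 ρ x‖₊ : ℝ≥0∞) ^ 2 ∂ρ.1) ^ (1/2 : ℝ)
          + (∫⁻ x, (‖DW1 ρ x - DW2 ρ x‖₊ : ℝ≥0∞) ^ 2 ∂ρ.1) ^ (1/2 : ℝ) := by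
      rw [← eLpNorm_two_eq, ← eLpNorm_two_eq, ← eLpNorm_two_eq]
      have heq : DW2 ρ = DW1 ρ - fun x => DW1 ρ x - DW2 ρ x := by
        funext x
        simp only [Pi.sub_apply]
        abel
      conv_lhs => rw [heq]
      exact eLpNorm_sub_le (hm1 ρ).aestronglyMeasurable
        ((hm1 ρ).sub (hm2 ρ)).aestronglyMeasurable one_le_two
    exact le_trans h2 (add_le_add
      (le_iSup (fun μ : P2 d => (∫⁻ x, (‖DW1 μ x‖₊ : ℝ≥0∞) ^ 2 ∂μ.1) ^ (1/2 : ℝ)) ρ)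
      (le_iSup (fun μ : P2 d => (∫⁻ x, (‖DW1 μ x - DW2 μ x‖₊ : ℝ≥0∞) ^ 2 ∂μ.1) ^ (1/2 : ℝ)) ρ))
  have hC := Ialpha_le_add (α := α) DW1 DW2 hm1 hm2
  calc (⨆ μ : P2 d, (‖W2 μ‖₊ : ℝ≥0∞))
        + (⨆ μ : P2 d, (∫⁻ x, (‖DW2 μ x‖₊ : ℝ≥0∞) ^ 2 ∂μ.1) ^ (1/2 : ℝ)) + Ialpha α DW2
      ≤ ((⨆ μ : P2 d, (‖W1 μ‖₊ : ℝ≥0∞)) + ⨆ μ : P2 d, (‖W1 μ - W2 μ‖₊ : ℝ≥0∞))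
        + ((⨆ μ : P2 d, (∫⁻ x, (‖DW1 μ x‖₊ : ℝ≥0∞) ^ 2 ∂μ.1) ^ (1/2 : ℝ))
            + ⨆ μ : P2 d, (∫⁻ x, (‖DW1 μ x - DW2 μ x‖₊ : ℝ≥0∞) ^ 2 ∂μ.1) ^ (1/2 : ℝ))
        + (Ialpha α DW1 + Ialpha α (fun μ x => DW1 μ x - DW2 μ x)) :=
        add_le_add (add_le_add hA hB) hC
    _ = _ := by ring

end Triangle

section Utils2

variable {d : ℕ}

lemma lint_lt_top_of_rpow {x : ℝ≥0∞} (h : x ^ (1/2 : ℝ) < ⊤) : x < ⊤ := by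
  by_contra hc
  rw [not_lt, top_le_iff] at hc
  rw [hc, ENNReal.top_rpow_of_pos (by norm_num)] at h
  exact lt_irrefl _ h

end Utils2

theorem stmt13 {d : ℕ} (α : ℝ) (hα : 0 < α ∧ α ≤ 1)
    (U : ℕ → P2 d → ℝ) (DU : ℕ → P2 d → Rd d → Rd d)
    (hdiff : ∀ n (μ : P2 d), IsDerivAt (U n) μ (DU n μ))
    (hdiffsub : ∀ n m (μ : P2 d),
      IsDerivAt (fun ρ => U n ρ - U m ρ) μ (fun x => DU n μ x - DU m μ x))
    (hfin : ∀ n, Nnorm α (U n) (DU n) < ⊤)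
    (hcauchy : ∀ ε : ℝ≥0∞, 0 < ε → ∃ N₀ : ℕ, ∀ n m, N₀ ≤ n → N₀ ≤ m →
      Nnorm α (fun ρ => U n ρ - U m ρ) (fun μ x => DU n μ x - DU m μ x) < ε) :
    ∃ (V : P2 d → ℝ) (DV : P2 d → Rd d → Rd d),
      (∀ μ : P2 d, IsDerivAt V μ (DV μ)) ∧
      Nnorm α V DV < ⊤ ∧
      Filter.Tendsto
        (fun n => Nnorm α (fun ρ => U n ρ - V ρ) (fun μ x => DU n μ x - DV μ x))
        Filter.atTop (nhds 0) := by
  classical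
  obtain ⟨hα0, hα1⟩ := hα
  set e : ℕ → ℝ := fun k => (2:ℝ)⁻¹ ^ k with he
  have he0 : ∀ k, 0 < e k := fun k => by positivity
  have heT : Filter.Tendsto e Filter.atTop (nhds 0) :=
    tendsto_pow_atTop_nhds_zero_of_lt_one (by norm_num) (by norm_num)
  choose φ hφ using fun k : ℕ => hcauchy (ENNReal.ofReal (e k)) (ENNReal.ofReal_pos.2 (he0 k))
  have hparts : ∀ k n m, φ k ≤ n → φ k ≤ m →
      (∀ ρ : P2 d, |U n ρ - U m ρ| ≤ e k) ∧
      (∀ ρ : P2 d, eLpNorm (fun x => DU n ρ x - DU m ρ x) 2 ρ.1 ≤ ENNReal.ofReal (e k)) ∧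
      Ialpha α (fun μ x => DU n μ x - DU m μ x) ≤ ENNReal.ofReal (e k) := by
    intro k n m hn hm
    obtain ⟨h1, h2, h3⟩ := nnorm_parts (le_of_lt (hφ k n m hn hm))
    exact ⟨fun ρ => abs_le_of_nnnorm_le (he0 k).le (h1 ρ), h2, h3⟩
  -- pointwise limit V
  have hVex : ∀ ρ : P2 d, ∃ l, Filter.Tendsto (fun n => U n ρ) Filter.atTop (nhds l) := by
    intro ρ
    apply cauchySeq_tendsto_of_complete
    rw [Metric.cauchySeq_iff]
    intro ε hε
    obtain ⟨k, hk⟩ := (heT.eventually_lt_const hε).exists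
    exact ⟨φ k, fun m hm n hn =>
      lt_of_le_of_lt (by rw [Real.dist_eq]; exact (hparts k m n hm hn).1 ρ) hk⟩
  choose V hV using hVex
  -- Lp limits of the derivatives
  have hmem : ∀ n (ρ : P2 d), MemLp (DU n ρ) 2 ρ.1 :=
    fun n ρ => memLp_two _ _ (hdiff n ρ).1 (hdiff n ρ).2.1
  set F : ℕ → ∀ ρ : P2 d, Lp (Rd d) 2 ρ.1 := fun n ρ => (hmem n ρ).toLp _ with hF
  have hFdist : ∀ k n m (ρ : P2 d), φ k ≤ n → φ k ≤ m → dist (F n ρ) (F m ρ) ≤ e k := by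
    intro k n m ρ hn hm
    rw [dist_eq_norm]
    rw [show F n ρ - F m ρ = ((hmem n ρ).sub (hmem m ρ)).toLp (DU n ρ - DU m ρ) from
      (MemLp.toLp_sub _ _).symm]
    rw [MeasureTheory.Lp.norm_toLp]
    exact ENNReal.toReal_le_of_le_ofReal (he0 k).le ((hparts k n m hn hm).2.1 ρ)
  have hGex : ∀ ρ : P2 d, ∃ G : Lp (Rd d) 2 ρ.1,
      Filter.Tendsto (fun n => F n ρ) Filter.atTop (nhds G) := by
    intro ρ
    apply cauchySeq_tendsto_of_complete
    rw [Metric.cauchySeq_iff]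
    intro ε hε
    obtain ⟨k, hk⟩ := (heT.eventually_lt_const hε).exists
    exact ⟨φ k, fun m hm n hn => lt_of_le_of_lt (hFdist k m n ρ hm hn) hk⟩
  choose G hG using hGex
  set DV : P2 d → Rd d → Rd d := fun ρ => ⇑(G ρ) with hDVdef
  have hDVm : ∀ ρ : P2 d, Measurable (DV ρ) := by
    intro ρ
    exact (MeasureTheory.Lp.stronglyMeasurable (G ρ)).measurable
  have hDVfin : ∀ ρ : P2 d, eLpNorm (DV ρ) 2 ρ.1 < ⊤ :=
    fun ρ => MeasureTheory.Lp.eLpNorm_lt_top (G ρ)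
  have hDVlint : ∀ ρ : P2 d, ∫⁻ x, (‖DV ρ x‖₊ : ℝ≥0∞) ^ 2 ∂ρ.1 < ⊤ := by
    intro ρ
    have := hDVfin ρ
    rw [eLpNorm_two_eq] at this
    exact lint_lt_top_of_rpow this
  have hconv : ∀ ρ : P2 d, Filter.Tendsto
      (fun m => eLpNorm (fun x => DU m ρ x - DV ρ x) 2 ρ.1) Filter.atTop (nhds 0) := by
    intro ρ
    have h1 : ∀ m, eLpNorm (fun x => DU m ρ x - DV ρ x) 2 ρ.1
        = ENNReal.ofReal (dist (F m ρ) (G ρ)) := by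
      intro m
      have hae : (fun x => DU m ρ x - DV ρ x) =ᵐ[ρ.1] ⇑(F m ρ - G ρ) := by
        filter_upwards [MeasureTheory.Lp.coeFn_sub (F m ρ) (G ρ), (hmem m ρ).coeFn_toLp]
          with x h1 h2
        rw [h1, Pi.sub_apply, h2]
      rw [eLpNorm_congr_ae hae, ← MeasureTheory.Lp.enorm_def (F m ρ - G ρ),
        ← ofReal_norm, dist_eq_norm]
    have hd : Filter.Tendsto (fun m => dist (F m ρ) (G ρ)) Filter.atTop (nhds 0) :=
      tendsto_iff_dist_tendsto_zero.1 (hG ρ)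
    have := (ENNReal.continuous_ofReal.tendsto 0).comp hd
    simp only [Function.comp_def, ENNReal.ofReal_zero] at this
    exact (funext h1 : _) ▸ this
  -- per-threshold bounds
  have hsupk : ∀ k n, φ k ≤ n → ∀ ρ : P2 d, |U n ρ - V ρ| ≤ e k := by
    intro k n hn ρ
    have hT : Filter.Tendsto (fun m => |U n ρ - U m ρ|) Filter.atTop (nhds |U n ρ - V ρ|) :=
      (tendsto_const_nhds.sub (hV ρ)).abs
    refine le_of_tendsto hT ?_
    filter_upwards [Filter.eventually_ge_atTop (φ k)] with m hm
    exact (hparts k n m hn hm).1 ρ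
  have hl2k : ∀ k n, φ k ≤ n → ∀ ρ : P2 d,
      eLpNorm (fun x => DU n ρ x - DV ρ x) 2 ρ.1 ≤ ENNReal.ofReal (e k) := by
    intro k n hn ρ
    have hT : Filter.Tendsto (fun m => ENNReal.ofReal (e k)
        + eLpNorm (fun x => DU m ρ x - DV ρ x) 2 ρ.1) Filter.atTop
        (nhds (ENNReal.ofReal (e k) + 0)) := Filter.Tendsto.const_add _ (hconv ρ)
    rw [add_zero] at hT
    refine ge_of_tendsto hT ?_
    filter_upwards [Filter.eventually_ge_atTop (φ k)] with m hm
    have heq : (fun x => DU n ρ x - DV ρ x)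
        = (fun x => DU n ρ x - DU m ρ x) + fun x => DU m ρ x - DV ρ x := by
      funext x
      simp only [Pi.add_apply]
      abel
    rw [heq]
    refine le_trans (eLpNorm_add_le ?_ ?_ one_le_two)
      (add_le_add ((hparts k n m hn hm).2.1 ρ) le_rfl)
    · exact ((hdiff n ρ).1.sub (hdiff m ρ).1).aestronglyMeasurable
    · exact ((hdiff m ρ).1.sub (hDVm ρ)).aestronglyMeasurable
  have hIak : ∀ k n, φ k ≤ n →
      Ialpha α (fun μ x => DU n μ x - DV μ x) ≤ ENNReal.ofReal (e k) := by
    intro k n hn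
    unfold Ialpha
    refine iSup_le fun μ => iSup_le fun ν => iSup_le fun Γ => iSup_le fun hc =>
      iSup_le fun hpos => iSup_le fun hone => ?_
    obtain ⟨hc0, hcT⟩ := denom_pos hα0 hpos
    rw [ENNReal.div_le_iff hc0 hcT]
    have hTend : Filter.Tendsto (fun m => ENNReal.ofReal (e k) * ENNReal.ofReal (C2 Γ) ^ α
        + eLpNorm (fun x => DU m μ x - DV μ x) 2 μ.1
        + eLpNorm (fun x => DU m ν x - DV ν x) 2 ν.1) Filter.atTop
        (nhds (ENNReal.ofReal (e k) * ENNReal.ofReal (C2 Γ) ^ α + 0 + 0)) :=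
      (Filter.Tendsto.const_add _ (hconv μ)).add (hconv ν)
    rw [add_zero, add_zero] at hTend
    refine ge_of_tendsto hTend ?_
    filter_upwards [Filter.eventually_ge_atTop (φ k)] with m hm
    have heq : (fun p : Rd d × Rd d => (DU n μ p.1 - DV μ p.1) - (DU n ν p.2 - DV ν p.2))
        = (fun p : Rd d × Rd d => (DU n μ p.1 - DU m μ p.1) - (DU n ν p.2 - DU m ν p.2))
          + ((fun p : Rd d × Rd d => DU m μ p.1 - DV μ p.1)
            + fun p : Rd d × Rd d => -(DU m ν p.2 - DV ν p.2)) := by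
      funext p
      simp only [Pi.add_apply]
      abel
    have hmeasA : Measurable fun p : Rd d × Rd d =>
        (DU n μ p.1 - DU m μ p.1) - (DU n ν p.2 - DU m ν p.2) :=
      (((hdiff n μ).1.comp measurable_fst).sub ((hdiff m μ).1.comp measurable_fst)).sub
        (((hdiff n ν).1.comp measurable_snd).sub ((hdiff m ν).1.comp measurable_snd))
    have hmeasB : Measurable fun p : Rd d × Rd d => DU m μ p.1 - DV μ p.1 :=
      ((hdiff m μ).1.comp measurable_fst).sub ((hDVm μ).comp measurable_fst)
    have hmeasC : Measurable fun p : Rd d × Rd d => -(DU m ν p.2 - DV ν p.2) :=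
      (((hdiff m ν).1.comp measurable_snd).sub ((hDVm ν).comp measurable_snd)).neg
    have htri : eLpNorm (fun p : Rd d × Rd d =>
          (DU n μ p.1 - DV μ p.1) - (DU n ν p.2 - DV ν p.2)) 2 Γ
        ≤ eLpNorm (fun p : Rd d × Rd d =>
            (DU n μ p.1 - DU m μ p.1) - (DU n ν p.2 - DU m ν p.2)) 2 Γ
          + (eLpNorm (fun p : Rd d × Rd d => DU m μ p.1 - DV μ p.1) 2 Γ
            + eLpNorm (fun p : Rd d × Rd d => -(DU m ν p.2 - DV ν p.2)) 2 Γ) := by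
      rw [heq]
      refine le_trans (eLpNorm_add_le hmeasA.aestronglyMeasurable
        (hmeasB.add hmeasC).aestronglyMeasurable one_le_two) ?_
      exact add_le_add le_rfl (eLpNorm_add_le hmeasB.aestronglyMeasurable
        hmeasC.aestronglyMeasurable one_le_two)
    have hA : eLpNorm (fun p : Rd d × Rd d =>
          (DU n μ p.1 - DU m μ p.1) - (DU n ν p.2 - DU m ν p.2)) 2 Γ
        ≤ ENNReal.ofReal (e k) * ENNReal.ofReal (C2 Γ) ^ α := by
      rw [eLpNorm_two_eq]
      refine (ENNReal.div_le_iff hc0 hcT).1 ?_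
      exact le_trans (quotient_le_Ialpha (DW := fun μ' x => DU n μ' x - DU m μ' x) hc hpos hone)
        ((hparts k n m hn hm).2.2)
    have hB : eLpNorm (fun p : Rd d × Rd d => DU m μ p.1 - DV μ p.1) 2 Γ
        = eLpNorm (fun x => DU m μ x - DV μ x) 2 μ.1 := by
      rw [eLpNorm_two_eq, eLpNorm_two_eq,
        lintegral_fst (f := fun x => (‖DU m μ x - DV μ x‖₊ : ℝ≥0∞) ^ 2) hc
          (((hdiff m μ).1.sub (hDVm μ)).nnnorm.coe_nnreal_ennreal.pow_const 2)]
    have hC : eLpNorm (fun p : Rd d × Rd d => -(DU m ν p.2 - DV ν p.2)) 2 Γ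
        = eLpNorm (fun x => DU m ν x - DV ν x) 2 ν.1 := by
      rw [show (fun p : Rd d × Rd d => -(DU m ν p.2 - DV ν p.2))
          = -(fun p : Rd d × Rd d => DU m ν p.2 - DV ν p.2) from rfl, eLpNorm_neg]
      rw [eLpNorm_two_eq, eLpNorm_two_eq,
        lintegral_snd (f := fun x => (‖DU m ν x - DV ν x‖₊ : ℝ≥0∞) ^ 2) hc
          (((hdiff m ν).1.sub (hDVm ν)).nnnorm.coe_nnreal_ennreal.pow_const 2)]
    calc (∫⁻ p, (‖(fun μ' x => DU n μ' x - DV μ' x) μ p.1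
            - (fun μ' x => DU n μ' x - DV μ' x) ν p.2‖₊ : ℝ≥0∞) ^ 2 ∂Γ) ^ (1/2 : ℝ)
        = eLpNorm (fun p : Rd d × Rd d =>
            (DU n μ p.1 - DV μ p.1) - (DU n ν p.2 - DV ν p.2)) 2 Γ := by
          rw [eLpNorm_two_eq]
      _ ≤ _ := htri
      _ ≤ ENNReal.ofReal (e k) * ENNReal.ofReal (C2 Γ) ^ α
            + eLpNorm (fun x => DU m μ x - DV μ x) 2 μ.1
            + eLpNorm (fun x => DU m ν x - DV ν x) 2 ν.1 := by
          rw [hB, hC, add_assoc]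
          exact add_le_add hA le_rfl
  -- the key uniform difference bound
  have hkey : ∀ k n, φ k ≤ n → ∀ (μ' ν' : P2 d) (Γ' : Measure (Rd d × Rd d)),
      IsCoupling μ' ν' Γ' → |(U n ν' - V ν') - (U n μ' - V μ')| ≤ e k * C2 Γ' := by
    intro k n hn μ' ν' Γ' hΓ'
    have hT : Filter.Tendsto (fun m => |(U n ν' - U m ν') - (U n μ' - U m μ')|) Filter.atTop
        (nhds |(U n ν' - V ν') - (U n μ' - V μ')|) :=
      ((tendsto_const_nhds.sub (hV ν')).sub (tendsto_const_nhds.sub (hV μ'))).abs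
    refine le_of_tendsto hT ?_
    filter_upwards [Filter.eventually_ge_atTop (φ k)] with m hm
    refine key_diff_le (fun ρ => U n ρ - U m ρ) (fun μ'' x => DU n μ'' x - DU m μ'' x)
      (hdiffsub n m) (e k) ?_ μ' ν' Γ' hΓ'
    intro ρ
    have h4 := (hparts k n m hn hm).2.1 ρ
    rw [eLpNorm_two_eq] at h4
    exact ENNReal.toReal_le_of_le_ofReal (he0 k).le h4
  -- moduli of the U n
  choose ωU hωU0 hωU00 hωUc hωUm hωUb using fun n (ρ : P2 d) => (hdiff n ρ).2.2
  -- differentiability of V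
  have hisder : ∀ ρ : P2 d, IsDerivAt V ρ (DV ρ) := by
    intro ρ
    refine ⟨hDVm ρ, hDVlint ρ, ?_⟩
    set w : ℝ → ℝ := fun r => if r ≤ 0 then 0 else ⨅ k : ℕ, (ωU (φ k) ρ r + 2 * e k) with hw
    have hbdd : ∀ r, BddBelow (Set.range fun k : ℕ => ωU (φ k) ρ r + 2 * e k) := by
      intro r
      refine ⟨0, ?_⟩
      rintro x ⟨k, rfl⟩
      have h5 := hωU0 (φ k) ρ r
      have h6 := he0 k
      positivity
    have hwnn : ∀ r, 0 ≤ w r := by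
      intro r
      rw [hw]
      dsimp only
      split
      · exact le_rfl
      · exact le_ciInf fun k => by
          have h5 := hωU0 (φ k) ρ r
          have h6 := he0 k
          positivity
    have hw0 : w 0 = 0 := by rw [hw]; simp
    refine ⟨w, hwnn, hw0, ?_, ?_, ?_⟩
    · -- continuity at 0
      rw [Metric.continuousAt_iff]
      intro ε hε
      have h2e : Filter.Tendsto (fun k => 2 * e k) Filter.atTop (nhds 0) := by
        have h2e' := heT.const_mul (2:ℝ)
        rw [mul_zero] at h2e'
        exact h2e'
      obtain ⟨k0, hk0⟩ := (h2e.eventually_lt_const (show (0:ℝ) < ε/2 by positivity)).exists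
      obtain ⟨δ, hδ0, hδ⟩ := Metric.continuousAt_iff.1 (hωUc (φ k0) ρ)
        (ε/2) (by positivity)
      refine ⟨δ, hδ0, fun {r} hr => ?_⟩
      rw [hw0, Real.dist_eq, sub_zero, abs_of_nonneg (hwnn r)]
      rcases le_or_gt r 0 with h|h
      · rw [hw]; dsimp only; rw [if_pos h]; positivity
      · rw [hw]; dsimp only; rw [if_neg (not_le.2 h)]
        have hle : (⨅ k : ℕ, (ωU (φ k) ρ r + 2 * e k)) ≤ ωU (φ k0) ρ r + 2 * e k0 :=
          ciInf_le (hbdd r) k0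
        have hωsmall : ωU (φ k0) ρ r < ε/2 := by
          have := hδ hr
          rw [hωU00, Real.dist_eq, sub_zero] at this
          exact lt_of_le_of_lt (le_abs_self _) this
        linarith
    · -- monotone
      intro a b hab
      rw [hw]
      dsimp only
      rcases le_or_gt a 0 with ha|ha
      · rw [if_pos ha]
        split
        · exact le_rfl
        · exact le_ciInf fun k => by
            have h5 := hωU0 (φ k) ρ b
            have h6 := he0 k
            positivity
      · have hb0 : ¬ b ≤ 0 := by linarith
        rw [if_neg (not_le.2 ha), if_neg hb0]
        exact ciInf_mono (hbdd a) fun k => add_le_add_left (hωUm (φ k) ρ hab) _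
    · -- the derivative estimate
      intro ν Γ hΓ
      have hA0 : 0 ≤ C2 Γ := C2_nonneg Γ
      have hIfin : ∀ k, (∫⁻ x, (‖DU (φ k) ρ x - DV ρ x‖₊ : ℝ≥0∞) ^ 2 ∂ρ.1) < ⊤ := by
        intro k
        have h7 := hl2k k (φ k) le_rfl ρ
        rw [eLpNorm_two_eq] at h7
        exact lint_lt_top_of_rpow (lt_of_le_of_lt h7 ENNReal.ofReal_lt_top)
      have hbound : ∀ k, |V ν - V ρ - ∫ p, ⟪p.2 - p.1, DV ρ p.1⟫ ∂Γ|
          ≤ C2 Γ * (ωU (φ k) ρ (C2 Γ) + 2 * e k) := by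
        intro k
        have h1 := hωUb (φ k) ρ ν Γ hΓ
        have h2 := hkey k (φ k) le_rfl ρ ν Γ hΓ
        have h3 : |∫ p, ⟪p.2 - p.1, DU (φ k) ρ p.1 - DV ρ p.1⟫ ∂Γ| ≤ C2 Γ * e k := by
          refine le_trans (coupling_inner_le hΓ (fun x => DU (φ k) ρ x - DV ρ x)
            ((hdiff (φ k) ρ).1.sub (hDVm ρ)) (hIfin k)) ?_
          refine mul_le_mul_of_nonneg_left ?_ hA0
          have h4 := hl2k k (φ k) le_rfl ρ
          rw [eLpNorm_two_eq] at h4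
          exact ENNReal.toReal_le_of_le_ofReal (he0 k).le h4
        have int1 : Integrable (fun p : Rd d × Rd d => ⟪p.2 - p.1, DU (φ k) ρ p.1⟫) Γ := by
          refine integrable_inner_of Γ _ _ (measurable_snd.sub measurable_fst)
            ((hdiff (φ k) ρ).1.comp measurable_fst) ?_ ?_
          · exact lt_of_le_of_lt (le_of_eq (lintegral_congr fun p => by
              rw [← neg_sub p.1 p.2, nnnorm_neg])) (coupling_sqdist_lintegral_lt_top hΓ)
          · rw [lintegral_fst (f := fun x => (‖DU (φ k) ρ x‖₊ : ℝ≥0∞) ^ 2) hΓ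
              ((hdiff (φ k) ρ).1.nnnorm.coe_nnreal_ennreal.pow_const 2)]
            exact (hdiff (φ k) ρ).2.1
        have int2 : Integrable (fun p : Rd d × Rd d => ⟪p.2 - p.1, DV ρ p.1⟫) Γ := by
          refine integrable_inner_of Γ _ _ (measurable_snd.sub measurable_fst)
            ((hDVm ρ).comp measurable_fst) ?_ ?_
          · exact lt_of_le_of_lt (le_of_eq (lintegral_congr fun p => by
              rw [← neg_sub p.1 p.2, nnnorm_neg])) (coupling_sqdist_lintegral_lt_top hΓ)
          · rw [lintegral_fst (f := fun x => (‖DV ρ x‖₊ : ℝ≥0∞) ^ 2) hΓ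
              ((hDVm ρ).nnnorm.coe_nnreal_ennreal.pow_const 2)]
            exact hDVlint ρ
        have hsplit : ∫ p, ⟪p.2 - p.1, DU (φ k) ρ p.1⟫ ∂Γ
              - ∫ p, ⟪p.2 - p.1, DV ρ p.1⟫ ∂Γ
            = ∫ p, ⟪p.2 - p.1, DU (φ k) ρ p.1 - DV ρ p.1⟫ ∂Γ := by
          rw [← integral_sub int1 int2]
          exact integral_congr_ae (Filter.Eventually.of_forall fun p =>
            (inner_sub_right _ _ _).symm)
        have hident : V ν - V ρ - ∫ p, ⟪p.2 - p.1, DV ρ p.1⟫ ∂Γ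
            = (U (φ k) ν - U (φ k) ρ - ∫ p, ⟪p.2 - p.1, DU (φ k) ρ p.1⟫ ∂Γ)
              - ((U (φ k) ν - V ν) - (U (φ k) ρ - V ρ))
              + (∫ p, ⟪p.2 - p.1, DU (φ k) ρ p.1⟫ ∂Γ
                - ∫ p, ⟪p.2 - p.1, DV ρ p.1⟫ ∂Γ) := by ring
        calc |V ν - V ρ - ∫ p, ⟪p.2 - p.1, DV ρ p.1⟫ ∂Γ|
            = |(U (φ k) ν - U (φ k) ρ - ∫ p, ⟪p.2 - p.1, DU (φ k) ρ p.1⟫ ∂Γ)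
              - ((U (φ k) ν - V ν) - (U (φ k) ρ - V ρ))
              + (∫ p, ⟪p.2 - p.1, DU (φ k) ρ p.1⟫ ∂Γ
                - ∫ p, ⟪p.2 - p.1, DV ρ p.1⟫ ∂Γ)| := by rw [hident]
          _ ≤ |U (φ k) ν - U (φ k) ρ - ∫ p, ⟪p.2 - p.1, DU (φ k) ρ p.1⟫ ∂Γ|
              + |(U (φ k) ν - V ν) - (U (φ k) ρ - V ρ)|
              + |∫ p, ⟪p.2 - p.1, DU (φ k) ρ p.1⟫ ∂Γ
                - ∫ p, ⟪p.2 - p.1, DV ρ p.1⟫ ∂Γ| :=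
            le_trans (abs_add_le _ _) (add_le_add_left (abs_sub _ _) _)
          _ ≤ C2 Γ * ωU (φ k) ρ (C2 Γ) + e k * C2 Γ + C2 Γ * e k := by
              refine add_le_add (add_le_add h1 h2) ?_
              rw [hsplit]
              exact h3
          _ = C2 Γ * (ωU (φ k) ρ (C2 Γ) + 2 * e k) := by ring
      rcases le_or_gt (C2 Γ) 0 with hA|hA
      · have hA' : C2 Γ = 0 := le_antisymm hA hA0
        have h8 := hbound 0
        rw [hA'] at h8 ⊢
        simpa using h8
      · have hw' : w (C2 Γ) = ⨅ k : ℕ, (ωU (φ k) ρ (C2 Γ) + 2 * e k) := by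
          rw [hw]; dsimp only; rw [if_neg (not_le.2 hA)]
        rw [hw']
        have hdiv : |V ν - V ρ - ∫ p, ⟪p.2 - p.1, DV ρ p.1⟫ ∂Γ| / C2 Γ
            ≤ ⨅ k : ℕ, (ωU (φ k) ρ (C2 Γ) + 2 * e k) :=
          le_ciInf fun k => (div_le_iff₀ hA).2 (by rw [mul_comm]; exact hbound k)
        calc |V ν - V ρ - ∫ p, ⟪p.2 - p.1, DV ρ p.1⟫ ∂Γ|
            = |V ν - V ρ - ∫ p, ⟪p.2 - p.1, DV ρ p.1⟫ ∂Γ| / C2 Γ * C2 Γ := by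
              field_simp
          _ ≤ (⨅ k : ℕ, (ωU (φ k) ρ (C2 Γ) + 2 * e k)) * C2 Γ :=
              mul_le_mul_of_nonneg_right hdiv hA0
          _ = C2 Γ * ⨅ k : ℕ, (ωU (φ k) ρ (C2 Γ) + 2 * e k) := mul_comm _ _
  -- Nnorm bounds on the differences
  have hNdiff : ∀ k n, φ k ≤ n →
      Nnorm α (fun ρ => U n ρ - V ρ) (fun μ x => DU n μ x - DV μ x)
        ≤ 3 * ENNReal.ofReal (e k) := by
    intro k n hn
    unfold Nnorm
    have hA : (⨆ μ : P2 d, (‖U n μ - V μ‖₊ : ℝ≥0∞)) ≤ ENNReal.ofReal (e k) :=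
      iSup_le fun ρ => nnnorm_le_of_abs_le (hsupk k n hn ρ)
    have hB : (⨆ μ : P2 d, (∫⁻ x, (‖DU n μ x - DV μ x‖₊ : ℝ≥0∞) ^ 2 ∂μ.1) ^ (1/2 : ℝ))
        ≤ ENNReal.ofReal (e k) := by
      refine iSup_le fun ρ => ?_
      rw [← eLpNorm_two_eq]
      exact hl2k k n hn ρ
    have hC := hIak k n hn
    calc _ ≤ ENNReal.ofReal (e k) + ENNReal.ofReal (e k) + ENNReal.ofReal (e k) :=
          add_le_add (add_le_add hA hB) hC
      _ = 3 * ENNReal.ofReal (e k) := by ring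
  have hVfin : Nnorm α V DV < ⊤ := by
    refine lt_of_le_of_lt (Nnorm_le_add (α := α) (U (φ 0)) V (DU (φ 0)) DV
      (fun μ => (hdiff (φ 0) μ).1) hDVm) ?_
    refine ENNReal.add_lt_top.2 ⟨hfin (φ 0), lt_of_le_of_lt (hNdiff 0 (φ 0) le_rfl) ?_⟩
    exact ENNReal.mul_lt_top (by norm_num) ENNReal.ofReal_lt_top
  refine ⟨V, DV, hisder, hVfin, ?_⟩
  rw [ENNReal.tendsto_nhds_zero]
  intro ε hε
  have h3e : Filter.Tendsto (fun k => 3 * ENNReal.ofReal (e k)) Filter.atTop (nhds 0) := by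
    have h9 : Filter.Tendsto (fun k => ENNReal.ofReal (e k)) Filter.atTop (nhds 0) := by
      have := (ENNReal.continuous_ofReal.tendsto 0).comp heT
      simpa [Function.comp_def] using this
    have := ENNReal.Tendsto.const_mul h9 (Or.inr (by norm_num : (3:ℝ≥0∞) ≠ ⊤))
    simpa using this
  obtain ⟨k, hk⟩ := (h3e.eventually_lt_const hε).exists
  filter_upwards [Filter.eventually_ge_atTop (φ k)] with n hn
  exact le_trans (hNdiff k n hn) hk.le

end
end
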